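/- arXiv:2103.05429 — 8 statements merged into one kernel-verified Lean document; each statement's English description precedes it below -/
import Mathlib

section
/- Let U be a measurable space with probability measure η, let 0 < a < 1 < b, and let σ : U → [a,b] be measurable with ∫_U σ dη = 1. Then 0 ≤ ∫_U σ(v) log(σ(v)) dη(v) ≤ (a(b−1)/(b−a)) · log(a) + (b(1−a)/(b−a)) · log(b). -/
open MeasureTheory Real

/-- Bounds on the entropy of a density with values in `[a,b]`. -/
theorem entropy_bounds_of_density
    {U : Type*} [MeasurableSpace U] (η : Measure U) [IsProbabilityMeasure η]
    (a b : ℝ) (ha : 0 < a) (ha1 : a < 1) (hb : 1 < b)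
    (σ : U → ℝ) (hσm : Measurable σ) (hσ : ∀ u, σ u ∈ Set.Icc a b)
    (hnorm : ∫ u, σ u ∂η = 1) :
    0 ≤ ∫ v, σ v * Real.log (σ v) ∂η ∧
      ∫ v, σ v * Real.log (σ v) ∂η
        ≤ (a * (b - 1) / (b - a)) * Real.log a + (b * (1 - a) / (b - a)) * Real.log b := by
  have hab : a < b := ha1.trans hb
  have hba : 0 < b - a := by linarith
  -- Integrability
  have hσi : Integrable σ η := by
    apply Integrable.mono' (integrable_const b) hσm.aestronglyMeasurable
    filter_upwards with u
    have := hσ u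
    rw [Real.norm_eq_abs, abs_le]; constructor <;> [linarith [this.1]; exact this.2]
  have hmeas : Measurable fun v => σ v * Real.log (σ v) :=
    hσm.mul ((Real.measurable_log.comp hσm))
  have hgi : Integrable (fun v => σ v * Real.log (σ v)) η := by
    apply Integrable.mono' (integrable_const (b * |Real.log a| + b * |Real.log b|))
      hmeas.aestronglyMeasurable
    filter_upwards with u
    have h1 := (hσ u).1; have h2 := (hσ u).2
    have hσpos : 0 < σ u := lt_of_lt_of_le ha h1
    rw [Real.norm_eq_abs, abs_mul, abs_of_pos hσpos]
    have hlog : |Real.log (σ u)| ≤ |Real.log a| + |Real.log b| := by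
      rcases abs_le.mp (le_refl |Real.log (σ u)|) with _
      rcases le_total (Real.log (σ u)) 0 with h | h
      · rw [abs_of_nonpos h]
        have : Real.log a ≤ Real.log (σ u) := Real.log_le_log ha h1
        have : -Real.log (σ u) ≤ -Real.log a := by linarith
        calc -Real.log (σ u) ≤ -Real.log a := this
          _ ≤ |Real.log a| := neg_le_abs _
          _ ≤ |Real.log a| + |Real.log b| := le_add_of_nonneg_right (abs_nonneg _)
      · rw [abs_of_nonneg h]
        have : Real.log (σ u) ≤ Real.log b := Real.log_le_log hσpos h2
        calc Real.log (σ u) ≤ Real.log b := this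
          _ ≤ |Real.log b| := le_abs_self _
          _ ≤ |Real.log a| + |Real.log b| := le_add_of_nonneg_left (abs_nonneg _)
    calc σ u * |Real.log (σ u)| ≤ b * (|Real.log a| + |Real.log b|) :=
          mul_le_mul h2 hlog (abs_nonneg _) (by linarith)
      _ = b * |Real.log a| + b * |Real.log b| := by ring
  constructor
  · -- lower bound via Jensen
    have hconv : ConvexOn ℝ (Set.Ici (0:ℝ)) fun x => x * Real.log x := Real.convexOn_mul_log
    have hjen := hconv.map_integral_le (μ := η) (f := σ)
      (Real.continuous_mul_log.continuousOn) isClosed_Ici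
      (Filter.Eventually.of_forall fun u => le_trans ha.le (hσ u).1) hσi
      (by exact hgi)
    rw [hnorm] at hjen
    simpa using hjen
  · -- upper bound via chord
    have hchord : ∀ u, σ u * Real.log (σ u) ≤
        ((b - σ u) / (b - a)) * (a * Real.log a) + ((σ u - a) / (b - a)) * (b * Real.log b) := by
      intro u
      have h1 := (hσ u).1; have h2 := (hσ u).2
      have htn : 0 ≤ (b - σ u) / (b - a) := div_nonneg (by linarith) hba.le
      have hsn : 0 ≤ (σ u - a) / (b - a) := div_nonneg (by linarith) hba.le
      have hts : (b - σ u) / (b - a) + (σ u - a) / (b - a) = 1 := by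
        field_simp
        ring
      have key := Real.convexOn_mul_log.2 (Set.mem_Ici.mpr ha.le)
        (Set.mem_Ici.mpr (by linarith : (0:ℝ) ≤ b)) htn hsn hts
      simp only [smul_eq_mul] at key
      have hx : (b - σ u) / (b - a) * a + (σ u - a) / (b - a) * b = σ u := by
        field_simp; ring
      rw [hx] at key
      calc σ u * Real.log (σ u) ≤ (b - σ u) / (b - a) * (a * Real.log a)
            + (σ u - a) / (b - a) * (b * Real.log b) := by
            simpa [mul_assoc] using key
        _ = ((b - σ u) / (b - a)) * (a * Real.log a) + ((σ u - a) / (b - a)) * (b * Real.log b) := by ring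
    have hint : ∫ v, σ v * Real.log (σ v) ∂η ≤
        ∫ v, ((b - σ v) / (b - a)) * (a * Real.log a) + ((σ v - a) / (b - a)) * (b * Real.log b) ∂η := by
      apply integral_mono hgi _ hchord
      apply Integrable.add
      · exact ((((integrable_const b).sub hσi).div_const _).mul_const _)
      · exact (((hσi.sub (integrable_const a)).div_const _).mul_const _)
    refine hint.trans (le_of_eq ?_)
    have hI1 : Integrable (fun v => (b - σ v) / (b - a) * (a * Real.log a)) η :=
      (((integrable_const b).sub hσi).div_const _).mul_const _
    have hI2 : Integrable (fun v => (σ v - a) / (b - a) * (b * Real.log b)) η :=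
      ((hσi.sub (integrable_const a)).div_const _).mul_const _
    rw [integral_add hI1 hI2]
    have e1 : ∫ v, ((b - σ v) / (b - a)) * (a * Real.log a) ∂η
        = ((b - 1) / (b - a)) * (a * Real.log a) := by
      rw [integral_mul_const, integral_div, integral_sub (integrable_const b) hσi, hnorm,
        integral_const]
      simp
    have e2 : ∫ v, ((σ v - a) / (b - a)) * (b * Real.log b) ∂η
        = ((1 - a) / (b - a)) * (b * Real.log b) := by
      rw [integral_mul_const, integral_div, integral_sub hσi (integrable_const a), hnorm,
        integral_const]
      simp
    rw [e1, e2]; ring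
end

section
/- Let U be a measurable space with probability measure η, 0 < a < 1 < b < ∞, and let S_{a,b} be the set of measurable σ : U → [a,b] with ∫_U σ dη = 1. Define f^ε(σ)(u) = ε · [−log(σ(u)) + ∫_U log(σ(v)) σ(v) dη(v)] · σ(u). Then f^ε is Lipschitz continuous from (S_{a,b}, ‖·‖_{L^p_η}) to L^p_η(U) for 1 ≤ p < ∞: there exists L = L(a,b,ε) such that ‖f^ε(σ₁) − f^ε(σ₂)‖_{L^p_η} ≤ L · ‖σ₁ − σ₂‖_{L^p_η} for all σ₁, σ₂ ∈ S_{a,b}. One may take L = ε(L_{a,b} + b·L_{a,b} + M_{a,b}) where L_{a,b} and M_{a,b} are the Lipschitz constant and max of |x log x| on [a,b]. -/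
open MeasureTheory Real

private lemma rpow_superadd {p : ℝ} (hp : 1 ≤ p) {A B : ℝ} (hA : 0 ≤ A) (hB : 0 ≤ B) :
    A ^ p + B ^ p ≤ (A + B) ^ p := by
  have h := NNReal.add_rpow_le_rpow_add A.toNNReal B.toNNReal hp
  have h2 : ((A.toNNReal ^ p + B.toNNReal ^ p : NNReal) : ℝ)
      ≤ (((A.toNNReal + B.toNNReal) ^ p : NNReal) : ℝ) := by exact_mod_cast h
  rw [NNReal.coe_add, NNReal.coe_rpow, NNReal.coe_rpow, NNReal.coe_rpow, NNReal.coe_add,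
    Real.coe_toNNReal _ hA, Real.coe_toNNReal _ hB] at h2
  exact h2

private lemma rpow_inv_subadd {p : ℝ} (hp : 1 ≤ p) {A B : ℝ} (hA : 0 ≤ A) (hB : 0 ≤ B) :
    (A + B) ^ (1 / p) ≤ A ^ (1 / p) + B ^ (1 / p) := by
  have hp0 : p ≠ 0 := by linarith
  have hs : (0 : ℝ) ≤ A ^ (1 / p) := Real.rpow_nonneg hA _
  have ht : (0 : ℝ) ≤ B ^ (1 / p) := Real.rpow_nonneg hB _
  have hA' : (A ^ (1 / p)) ^ p = A := by
    rw [← Real.rpow_mul hA, one_div, inv_mul_cancel₀ hp0, Real.rpow_one]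
  have hB' : (B ^ (1 / p)) ^ p = B := by
    rw [← Real.rpow_mul hB, one_div, inv_mul_cancel₀ hp0, Real.rpow_one]
  have key : A + B ≤ (A ^ (1 / p) + B ^ (1 / p)) ^ p := by
    have := rpow_superadd hp hs ht
    rwa [hA', hB'] at this
  calc (A + B) ^ (1 / p) ≤ ((A ^ (1 / p) + B ^ (1 / p)) ^ p) ^ (1 / p) :=
        Real.rpow_le_rpow (add_nonneg hA hB) key (by positivity)
    _ = A ^ (1 / p) + B ^ (1 / p) := by
        rw [← Real.rpow_mul (add_nonneg hs ht), mul_one_div_cancel hp0, Real.rpow_one]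

private lemma rpow_two_bound {p : ℝ} (hp : 1 ≤ p) {s t : ℝ} (hs : 0 ≤ s) (ht : 0 ≤ t) :
    (s + t) ^ p ≤ 2 ^ p * (s ^ p + t ^ p) := by
  have hp0 : (0 : ℝ) ≤ p := by linarith
  have h1 : s + t ≤ 2 * max s t := by
    rcases le_total s t with h | h
    · rw [max_eq_right h]; linarith
    · rw [max_eq_left h]; linarith
  have h2 : (max s t) ^ p ≤ s ^ p + t ^ p := by
    rcases le_total s t with h | h
    · rw [max_eq_right h]; nlinarith [Real.rpow_nonneg hs p]
    · rw [max_eq_left h]; nlinarith [Real.rpow_nonneg ht p]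
  calc (s + t) ^ p ≤ (2 * max s t) ^ p :=
        Real.rpow_le_rpow (add_nonneg hs ht) h1 hp0
    _ = 2 ^ p * (max s t) ^ p := Real.mul_rpow (by norm_num) (le_max_of_le_left hs)
    _ ≤ 2 ^ p * (s ^ p + t ^ p) := by
        have : (0:ℝ) ≤ (2:ℝ) ^ p := Real.rpow_nonneg (by norm_num) p
        nlinarith

/-- The entropic replicator term `f^ε` is Lipschitz on `S_{a,b}` in the `L^p_η` norm. -/
theorem entropic_term_lipschitz
    {U : Type*} [MeasurableSpace U] (η : Measure U) [IsProbabilityMeasure η]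
    (a b ε p : ℝ) (ha : 0 < a) (ha1 : a < 1) (hb : 1 < b) (hε : 0 < ε) (hp : 1 ≤ p) :
    ∃ L : ℝ, 0 < L ∧
      ∀ σ₁ σ₂ : U → ℝ, Measurable σ₁ → Measurable σ₂ →
        (∀ u, σ₁ u ∈ Set.Icc a b) → (∀ u, σ₂ u ∈ Set.Icc a b) →
        (∫ u, σ₁ u ∂η) = 1 → (∫ u, σ₂ u ∂η) = 1 →
        (∫ u, |(ε * (-(Real.log (σ₁ u)) + ∫ v, Real.log (σ₁ v) * σ₁ v ∂η) * σ₁ u)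
              - (ε * (-(Real.log (σ₂ u)) + ∫ v, Real.log (σ₂ v) * σ₂ v ∂η) * σ₂ u)| ^ p ∂η)
            ^ (1 / p)
          ≤ L * (∫ u, |σ₁ u - σ₂ u| ^ p ∂η) ^ (1 / p) := by
  have hp' : 0 < p := lt_of_lt_of_le one_pos hp
  have hp0 : p ≠ 0 := ne_of_gt hp'
  have hb0 : 0 < b := lt_trans one_pos hb
  have hloga : Real.log a < 0 := Real.log_neg ha ha1
  have hlogb : 0 < Real.log b := Real.log_pos hb
  set Λ : ℝ := -Real.log a + Real.log b with hΛdef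
  have hΛ : 0 < Λ := by simp only [hΛdef]; linarith
  set La : ℝ := Λ + b / a with hLadef
  have hLa : 0 < La := by have : 0 < b / a := div_pos hb0 ha; simp only [hLadef]; linarith
  set Ma : ℝ := b * Λ with hMadef
  have hMa : 0 < Ma := mul_pos hb0 hΛ
  set K : ℝ := ε * (La + Ma) with hKdef
  set C : ℝ := ε * (b * La) with hCdef
  have hK : 0 < K := mul_pos hε (by linarith)
  have hC : 0 < C := mul_pos hε (mul_pos hb0 hLa)
  -- bounds on log on [a,b]
  have hlog_bdd : ∀ x ∈ Set.Icc a b, |Real.log x| ≤ Λ := by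
    intro x hx
    rw [abs_le]
    constructor
    · have h1 : Real.log a ≤ Real.log x := Real.log_le_log ha hx.1
      simp only [hΛdef]; linarith
    · have h2 : Real.log x ≤ Real.log b := Real.log_le_log (lt_of_lt_of_le ha hx.1) hx.2
      simp only [hΛdef]; linarith
  have hlog_lip_aux : ∀ x ∈ Set.Icc a b, ∀ y ∈ Set.Icc a b,
      Real.log x - Real.log y ≤ (1 / a) * |x - y| := by
    intro x hx y hy
    have hxp : 0 < x := lt_of_lt_of_le ha hx.1
    have hyp : 0 < y := lt_of_lt_of_le ha hy.1
    rcases le_total x y with h | h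
    · have : Real.log x ≤ Real.log y := Real.log_le_log hxp h
      have : Real.log x - Real.log y ≤ 0 := by linarith
      have h0 : 0 ≤ (1 / a) * |x - y| := by positivity
      linarith
    · have h1 : Real.log x - Real.log y = Real.log (x / y) :=
        (Real.log_div (ne_of_gt hxp) (ne_of_gt hyp)).symm
      have h2 : Real.log (x / y) ≤ x / y - 1 :=
        Real.log_le_sub_one_of_pos (div_pos hxp hyp)
      have h3 : x / y - 1 = (x - y) / y := by field_simp
      have h4 : (x - y) / y ≤ (x - y) / a :=
        div_le_div_of_nonneg_left (by linarith) ha hy.1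
      have h5 : (x - y) / a = (1 / a) * (x - y) := by ring
      have h6 : x - y ≤ |x - y| := le_abs_self _
      have h7 : (1 / a) * (x - y) ≤ (1 / a) * |x - y| := by
        apply mul_le_mul_of_nonneg_left h6 (by positivity)
      linarith
  have hlog_lip : ∀ x ∈ Set.Icc a b, ∀ y ∈ Set.Icc a b,
      |Real.log x - Real.log y| ≤ (1 / a) * |x - y| := by
    intro x hx y hy
    rw [abs_le]
    constructor
    · have := hlog_lip_aux y hy x hx
      rw [abs_sub_comm] at this; linarith
    · exact hlog_lip_aux x hx y hy
  have hG_lip : ∀ x ∈ Set.Icc a b, ∀ y ∈ Set.Icc a b,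
      |Real.log x * x - Real.log y * y| ≤ La * |x - y| := by
    intro x hx y hy
    have e : Real.log x * x - Real.log y * y
        = Real.log x * (x - y) + (Real.log x - Real.log y) * y := by ring
    have hyabs : |y| ≤ b := by
      rw [abs_of_pos (lt_of_lt_of_le ha hy.1)]; exact hy.2
    calc |Real.log x * x - Real.log y * y|
        ≤ |Real.log x * (x - y)| + |(Real.log x - Real.log y) * y| := by
          rw [e]; exact abs_add_le _ _
      _ = |Real.log x| * |x - y| + |Real.log x - Real.log y| * |y| := by
          rw [abs_mul, abs_mul]
      _ ≤ Λ * |x - y| + ((1 / a) * |x - y|) * b := by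
          apply add_le_add
          · exact mul_le_mul_of_nonneg_right (hlog_bdd x hx) (abs_nonneg _)
          · exact mul_le_mul (hlog_lip x hx y hy) hyabs (abs_nonneg _)
              (by positivity)
      _ = La * |x - y| := by simp only [hLadef]; ring
  have hG_bdd : ∀ x ∈ Set.Icc a b, |Real.log x * x| ≤ Ma := by
    intro x hx
    have hxabs : |x| ≤ b := by rw [abs_of_pos (lt_of_lt_of_le ha hx.1)]; exact hx.2
    calc |Real.log x * x| = |Real.log x| * |x| := abs_mul _ _
      _ ≤ Λ * b := mul_le_mul (hlog_bdd x hx) hxabs (abs_nonneg _) (le_of_lt hΛ)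
      _ = Ma := by simp only [hMadef]; ring
  -- integrability helper
  have hint : ∀ (f : U → ℝ) (c : ℝ), Measurable f → (∀ u, |f u| ≤ c) → Integrable f η := by
    intro f c hf hc
    exact (integrable_const c).mono' hf.aestronglyMeasurable
      (ae_of_all _ fun u => by simpa [Real.norm_eq_abs] using hc u)
  refine ⟨2 * (K + C), by positivity, ?_⟩
  intro σ₁ σ₂ hm₁ hm₂ hr₁ hr₂ hi₁ hi₂
  set I₁ : ℝ := ∫ v, Real.log (σ₁ v) * σ₁ v ∂η with hI₁def
  set I₂ : ℝ := ∫ v, Real.log (σ₂ v) * σ₂ v ∂η with hI₂def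
  set Δ : U → ℝ := fun u => σ₁ u - σ₂ u with hΔdef
  set D : ℝ := ∫ u, |Δ u| ∂η with hDdef
  have hD0 : 0 ≤ D := integral_nonneg fun u => abs_nonneg _
  have hΔbdd : ∀ u, |Δ u| ≤ b - a := by
    intro u
    have h1 := hr₁ u; have h2 := hr₂ u
    rw [abs_le]; constructor <;> simp only [hΔdef] <;>
      [linarith [h1.1, h2.2]; linarith [h1.2, h2.1]]
  have hΔm : Measurable Δ := hm₁.sub hm₂
  have hΔai : Integrable (fun u => |Δ u|) η :=
    hint _ (b - a) hΔm.abs (fun u => by simpa [abs_abs] using hΔbdd u)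
  have hGm₁ : Measurable fun v => Real.log (σ₁ v) * σ₁ v :=
    (Real.measurable_log.comp hm₁).mul hm₁
  have hGm₂ : Measurable fun v => Real.log (σ₂ v) * σ₂ v :=
    (Real.measurable_log.comp hm₂).mul hm₂
  have hGi₁ : Integrable (fun v => Real.log (σ₁ v) * σ₁ v) η :=
    hint _ Ma hGm₁ fun u => hG_bdd _ (hr₁ u)
  have hGi₂ : Integrable (fun v => Real.log (σ₂ v) * σ₂ v) η :=
    hint _ Ma hGm₂ fun u => hG_bdd _ (hr₂ u)
  have hI₁_bdd : |I₁| ≤ Ma := by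
    have := norm_integral_le_of_norm_le (μ := η) (f := fun v => Real.log (σ₁ v) * σ₁ v)
      (g := fun _ => Ma) (integrable_const Ma)
      (ae_of_all _ fun u => by rw [Real.norm_eq_abs]; exact hG_bdd _ (hr₁ u))
    simpa [Real.norm_eq_abs, ← hI₁def] using this
  have hII : |I₁ - I₂| ≤ La * D := by
    have hsub : I₁ - I₂ = ∫ v, (Real.log (σ₁ v) * σ₁ v - Real.log (σ₂ v) * σ₂ v) ∂η :=
      (integral_sub hGi₁ hGi₂).symm
    have hbound := norm_integral_le_of_norm_le (μ := η)
      (f := fun v => Real.log (σ₁ v) * σ₁ v - Real.log (σ₂ v) * σ₂ v)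
      (g := fun v => La * |Δ v|) (hΔai.const_mul La)
      (ae_of_all _ fun u => by
        simpa [Real.norm_eq_abs] using hG_lip _ (hr₁ u) _ (hr₂ u))
    rw [integral_const_mul _ _] at hbound
    rw [hsub]
    simpa [Real.norm_eq_abs, ← hDdef] using hbound
  -- X and N
  set X : ℝ := ∫ u, |Δ u| ^ p ∂η with hXdef
  have hΔpi : Integrable (fun u => |Δ u| ^ p) η := by
    apply hint _ ((b - a) ^ p)
    · exact (Real.continuous_rpow_const (le_of_lt hp')).measurable.comp hΔm.abs
    · intro u
      rw [abs_of_nonneg (Real.rpow_nonneg (abs_nonneg _) _)]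
      exact Real.rpow_le_rpow (abs_nonneg _) (hΔbdd u) (le_of_lt hp')
  have hX0 : 0 ≤ X := integral_nonneg fun u => Real.rpow_nonneg (abs_nonneg _) _
  set N : ℝ := X ^ (1 / p) with hNdef
  have hN0 : 0 ≤ N := Real.rpow_nonneg hX0 _
  -- Jensen : D ≤ N
  have hDN : D ≤ N := by
    have hconv : ConvexOn ℝ (Set.Ici 0) fun x : ℝ => x ^ p := convexOn_rpow hp
    have hcont : ContinuousOn (fun x : ℝ => x ^ p) (Set.Ici 0) :=
      (Real.continuous_rpow_const (le_of_lt hp')).continuousOn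
    have hjen := hconv.map_average_le hcont isClosed_Ici
      (ae_of_all _ fun u => Set.mem_Ici.mpr (abs_nonneg (Δ u))) hΔai
      (by simpa [Function.comp_def] using hΔpi)
    rw [average_eq_integral, average_eq_integral] at hjen
    -- hjen : D ^ p ≤ X (with composition unfolded)
    have hjen' : D ^ p ≤ X := by simpa [Function.comp, ← hDdef, ← hXdef] using hjen
    calc D = (D ^ p) ^ (1 / p) := by
          rw [← Real.rpow_mul hD0, mul_one_div_cancel hp0, Real.rpow_one]
      _ ≤ X ^ (1 / p) := Real.rpow_le_rpow (Real.rpow_nonneg hD0 _) hjen' (by positivity)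
  -- pointwise bound
  set F : U → ℝ := fun u =>
    (ε * (-(Real.log (σ₁ u)) + I₁) * σ₁ u) - (ε * (-(Real.log (σ₂ u)) + I₂) * σ₂ u)
    with hFdef
  have hpt : ∀ u, |F u| ≤ K * |Δ u| + C * D := by
    intro u
    have e : F u = ε * (-(Real.log (σ₁ u) * σ₁ u - Real.log (σ₂ u) * σ₂ u)
        + I₁ * (σ₁ u - σ₂ u) + (I₁ - I₂) * σ₂ u) := by
      simp only [hFdef]; ring
    have hσ₂abs : |σ₂ u| ≤ b := by
      rw [abs_of_pos (lt_of_lt_of_le ha (hr₂ u).1)]; exact (hr₂ u).2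
    have h1 : |(-(Real.log (σ₁ u) * σ₁ u - Real.log (σ₂ u) * σ₂ u)
        + I₁ * (σ₁ u - σ₂ u) + (I₁ - I₂) * σ₂ u)|
        ≤ La * |Δ u| + Ma * |Δ u| + (La * D) * b := by
      calc |(-(Real.log (σ₁ u) * σ₁ u - Real.log (σ₂ u) * σ₂ u)
            + I₁ * (σ₁ u - σ₂ u) + (I₁ - I₂) * σ₂ u)|
          ≤ |(-(Real.log (σ₁ u) * σ₁ u - Real.log (σ₂ u) * σ₂ u))
              + I₁ * (σ₁ u - σ₂ u)| + |(I₁ - I₂) * σ₂ u| := abs_add_le _ _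
        _ ≤ |(-(Real.log (σ₁ u) * σ₁ u - Real.log (σ₂ u) * σ₂ u))|
              + |I₁ * (σ₁ u - σ₂ u)| + |(I₁ - I₂) * σ₂ u| := by
            have := abs_add_le (-(Real.log (σ₁ u) * σ₁ u - Real.log (σ₂ u) * σ₂ u))
              (I₁ * (σ₁ u - σ₂ u))
            linarith [abs_nonneg ((I₁ - I₂) * σ₂ u)]
        _ ≤ La * |Δ u| + Ma * |Δ u| + (La * D) * b := by
            apply add_le_add
            apply add_le_add
            · rw [abs_neg]; exact hG_lip _ (hr₁ u) _ (hr₂ u)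
            · rw [abs_mul]
              exact mul_le_mul hI₁_bdd le_rfl (abs_nonneg _) (le_of_lt hMa)
            · rw [abs_mul]
              exact mul_le_mul hII hσ₂abs (abs_nonneg _)
                (mul_nonneg (le_of_lt hLa) hD0)
    calc |F u| = ε * |(-(Real.log (σ₁ u) * σ₁ u - Real.log (σ₂ u) * σ₂ u)
          + I₁ * (σ₁ u - σ₂ u) + (I₁ - I₂) * σ₂ u)| := by
          rw [e, abs_mul, abs_of_pos hε]
      _ ≤ ε * (La * |Δ u| + Ma * |Δ u| + (La * D) * b) :=
          mul_le_mul_of_nonneg_left h1 (le_of_lt hε)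
      _ = K * |Δ u| + C * D := by simp only [hKdef, hCdef]; ring
  -- integral bound
  set c₁ : ℝ := 2 ^ p * K ^ p with hc₁def
  set c₂ : ℝ := 2 ^ p * (C * D) ^ p with hc₂def
  have hc₁0 : 0 ≤ c₁ := mul_nonneg (Real.rpow_nonneg (by norm_num) _)
    (Real.rpow_nonneg (le_of_lt hK) _)
  have hc₂0 : 0 ≤ c₂ := mul_nonneg (Real.rpow_nonneg (by norm_num) _)
    (Real.rpow_nonneg (mul_nonneg (le_of_lt hC) hD0) _)
  have hptp : ∀ u, |F u| ^ p ≤ c₁ * |Δ u| ^ p + c₂ := by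
    intro u
    have h1 : |F u| ^ p ≤ (K * |Δ u| + C * D) ^ p :=
      Real.rpow_le_rpow (abs_nonneg _) (hpt u) (le_of_lt hp')
    have h2 : (K * |Δ u| + C * D) ^ p ≤ 2 ^ p * ((K * |Δ u|) ^ p + (C * D) ^ p) :=
      rpow_two_bound hp (mul_nonneg (le_of_lt hK) (abs_nonneg _))
        (mul_nonneg (le_of_lt hC) hD0)
    have h3 : (K * |Δ u|) ^ p = K ^ p * |Δ u| ^ p :=
      Real.mul_rpow (le_of_lt hK) (abs_nonneg _)
    have h4 : 2 ^ p * ((K * |Δ u|) ^ p + (C * D) ^ p) = c₁ * |Δ u| ^ p + c₂ := by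
      rw [h3]; simp only [hc₁def, hc₂def]; ring
    linarith
  have hgi : Integrable (fun u => c₁ * |Δ u| ^ p + c₂) η :=
    (hΔpi.const_mul c₁).add (integrable_const c₂)
  have hmono : (∫ u, |F u| ^ p ∂η) ≤ c₁ * X + c₂ := by
    have h := integral_mono_of_nonneg
      (ae_of_all _ fun u => Real.rpow_nonneg (abs_nonneg (F u)) p) hgi
      (ae_of_all _ hptp)
    rwa [integral_add (hΔpi.const_mul c₁) (integrable_const c₂), integral_const_mul _ _,
      integral_const, probReal_univ, smul_eq_mul, one_mul,
      ← hXdef] at h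
  have hF0 : 0 ≤ ∫ u, |F u| ^ p ∂η :=
    integral_nonneg fun u => Real.rpow_nonneg (abs_nonneg _) _
  have hfin : (∫ u, |F u| ^ p ∂η) ^ (1 / p) ≤ 2 * (K + C) * N := by
    calc (∫ u, |F u| ^ p ∂η) ^ (1 / p)
        ≤ (c₁ * X + c₂) ^ (1 / p) := Real.rpow_le_rpow hF0 hmono (by positivity)
      _ ≤ (c₁ * X) ^ (1 / p) + c₂ ^ (1 / p) :=
          rpow_inv_subadd hp (mul_nonneg hc₁0 hX0) hc₂0
      _ = 2 * K * N + 2 * (C * D) := by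
          have e₁ : c₁ * X = ((2 * K) ^ p) * X := by
            simp only [hc₁def]; rw [Real.mul_rpow (by norm_num) (le_of_lt hK)]
          have e₂ : (((2 * K) ^ p) * X) ^ (1 / p) = (2 * K) * N := by
            rw [Real.mul_rpow (Real.rpow_nonneg (by positivity) _) hX0,
              ← Real.rpow_mul (by positivity), mul_one_div_cancel hp0, Real.rpow_one,
              ← hNdef]
          have e₃ : c₂ ^ (1 / p) = 2 * (C * D) := by
            have : c₂ = (2 * (C * D)) ^ p := by
              simp only [hc₂def]
              rw [Real.mul_rpow (by norm_num) (mul_nonneg (le_of_lt hC) hD0)]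
            rw [this, ← Real.rpow_mul (by positivity), mul_one_div_cancel hp0,
              Real.rpow_one]
          rw [e₁, e₂, e₃]
      _ ≤ 2 * K * N + 2 * (C * N) := by
          have : 2 * (C * D) ≤ 2 * (C * N) := by
            apply mul_le_mul_of_nonneg_left _ (by norm_num)
            exact mul_le_mul_of_nonneg_left hDN (le_of_lt hC)
          linarith
      _ = 2 * (K + C) * N := by ring
  -- match goal
  simpa only [← hI₁def, ← hI₂def, hFdef, ← hΔdef, ← hXdef, ← hNdef] using hfin
end

section
/- Let U be a compact metric space with probability measure η, 0 < a < 1 < b, and S_{a,b} the set of measurable σ : U → [a,b] with ∫_U σ dη = 1. Let J : ℝ^d × U × ℝ^d × U → ℝ be bounded and Lipschitz with sup-norm bound ‖J‖_∞. Define f^J(x,σ,x',σ')(u) = [∫_U J(x,u,x',u')σ'(u') dη(u') − ∫_U ∫_U J(x,v,x',u')σ'(u')σ(v) dη(u')dη(v)] · σ(u). Then f^J is Lipschitz in all four arguments: there exists L = L(J,b) such that for all x_i, x_i' ∈ ℝ^d and σ_i, σ_i' ∈ S_{a,b} (i = 1,2), ‖f^J(x₂,σ₂,x₂',σ₂') −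 f^J(x₁,σ₁,x₁',σ₁')‖_{L^p_η} ≤ L(‖x₂−x₁‖ + ‖σ₂−σ₁‖_{L^p_η} + ‖x₂'−x₁'‖ + ‖σ₂'−σ₁'‖_{L^p_η}). -/
open MeasureTheory Real

lemma aux_rpow_split {x p : ℝ} (hx : 0 < x) (hp : 0 < p) :
    x ^ p = x ^ (p - 1) * x := by
  nth_rewrite 3 [← Real.rpow_one x]
  rw [← Real.rpow_add hx]; ring_nf

lemma aux_rpow_add_le {p X Y : ℝ} (hp : 1 ≤ p) (hX : 0 ≤ X) (hY : 0 ≤ Y) :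
    X ^ p + Y ^ p ≤ (X + Y) ^ p := by
  have hp0 : 0 < p := lt_of_lt_of_le one_pos hp
  rcases eq_or_lt_of_le (add_nonneg hX hY) with h | h
  · have hX0 : X = 0 := by linarith
    have hY0 : Y = 0 := by linarith
    simp [hX0, hY0, Real.zero_rpow hp0.ne']
  · have h1 : X ^ p ≤ (X + Y) ^ (p - 1) * X := by
      rcases eq_or_lt_of_le hX with hX0 | hX0
      · rw [← hX0, Real.zero_rpow hp0.ne']
        positivity
      · rw [aux_rpow_split hX0 hp0]
        exact mul_le_mul_of_nonneg_right
          (Real.rpow_le_rpow hX (by linarith) (by linarith)) hX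
    have h2 : Y ^ p ≤ (X + Y) ^ (p - 1) * Y := by
      rcases eq_or_lt_of_le hY with hY0 | hY0
      · rw [← hY0, Real.zero_rpow hp0.ne']
        positivity
      · rw [aux_rpow_split hY0 hp0]
        exact mul_le_mul_of_nonneg_right
          (Real.rpow_le_rpow hY (by linarith) (by linarith)) hY
    calc X ^ p + Y ^ p ≤ (X + Y) ^ (p - 1) * (X + Y) := by linarith
      _ = (X + Y) ^ p := (aux_rpow_split h hp0).symm

lemma aux_rpow_two {p x y : ℝ} (hp : 1 ≤ p) (hx : 0 ≤ x) (hy : 0 ≤ y) :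
    (x + y) ^ p ≤ 2 ^ p * (x ^ p + y ^ p) := by
  have hp0 : (0:ℝ) ≤ p := by linarith
  have h1 : x + y ≤ 2 * max x y := by
    rcases le_total x y with h | h
    · simp [max_eq_right h]; linarith
    · simp [max_eq_left h]; linarith
  calc (x + y) ^ p ≤ (2 * max x y) ^ p :=
        Real.rpow_le_rpow (by linarith) h1 hp0
    _ = 2 ^ p * (max x y) ^ p := Real.mul_rpow (by norm_num) (le_max_of_le_left hx)
    _ ≤ 2 ^ p * (x ^ p + y ^ p) := by
        refine mul_le_mul_of_nonneg_left ?_ (by positivity)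
        rcases le_total x y with h | h
        · rw [max_eq_right h]
          nlinarith [Real.rpow_nonneg hx p]
        · rw [max_eq_left h]
          nlinarith [Real.rpow_nonneg hy p]

section Aux
variable {U : Type*} [MeasurableSpace U] (η : Measure U) [IsProbabilityMeasure η]

lemma aux_integ {g : U → ℝ} {M : ℝ} (hg : Measurable g) (hM : ∀ u, |g u| ≤ M) :
    Integrable g η :=
  ⟨hg.aestronglyMeasurable, HasFiniteIntegral.of_bounded (C := M)
    (ae_of_all _ fun u => by simpa [Real.norm_eq_abs] using hM u)⟩

omit [IsProbabilityMeasure η] in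
lemma aux_keyabs (g : U → ℝ) : |∫ u, g u ∂η| ≤ ∫ u, |g u| ∂η := by
  simpa [Real.norm_eq_abs] using norm_integral_le_integral_norm (μ := η) g

lemma aux_key {g : U → ℝ} {M : ℝ} (hg : Measurable g) (hM : ∀ u, |g u| ≤ M) :
    |∫ u, g u ∂η| ≤ M := by
  refine (aux_keyabs η g).trans ?_
  calc ∫ u, |g u| ∂η ≤ ∫ _, M ∂η :=
        integral_mono (aux_integ η hg hM).abs (integrable_const M) hM
    _ = M := by simp

omit [IsProbabilityMeasure η] in
lemma aux_key2 {g h : U → ℝ} (hg : Integrable g η) (hh : Integrable h η)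
    (hle : ∀ u, |g u| ≤ h u) : |∫ u, g u ∂η| ≤ ∫ u, h u ∂η :=
  (aux_keyabs η g).trans (integral_mono hg.abs hh hle)

lemma aux_intlin (c e : ℝ) {g : U → ℝ} (hg : Integrable g η) :
    (∫ u, (c + e * g u) ∂η) = c + e * ∫ u, g u ∂η := by
  rw [integral_add (integrable_const c) (hg.const_mul e), integral_const_mul]
  simp

lemma aux_jensen {g : U → ℝ} {M p : ℝ} (hg : Measurable g) (hb : ∀ u, |g u| ≤ M) (hp : 1 ≤ p) :
    ∫ u, |g u| ∂η ≤ (∫ u, |g u| ^ p ∂η) ^ (1 / p) := by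
  have hp0 : 0 < p := lt_of_lt_of_le one_pos hp
  set M' := max M 0 with hM'
  have hb' : ∀ u, |g u| ≤ M' := fun u => (hb u).trans (le_max_left _ _)
  have h1 : Integrable (fun u => |g u|) η :=
    aux_integ η hg.abs (fun u => by simpa [abs_abs] using hb' u)
  have hmeas2 : Measurable fun u => |g u| ^ p :=
    (Real.continuous_rpow_const hp0.le).measurable.comp hg.abs
  have h2 : Integrable (fun u => |g u| ^ p) η :=
    aux_integ η hmeas2 (fun u => by
      rw [abs_of_nonneg (Real.rpow_nonneg (abs_nonneg _) p)]
      exact Real.rpow_le_rpow (abs_nonneg _) (hb' u) hp0.le)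
  have hJ : (∫ u, |g u| ∂η) ^ p ≤ ∫ u, |g u| ^ p ∂η := by
    simpa using (convexOn_rpow hp).map_integral_le (μ := η) (f := fun u => |g u|)
      ((Real.continuous_rpow_const hp0.le).continuousOn) isClosed_Ici
      (ae_of_all _ fun u => abs_nonneg (g u)) h1 h2
  have hnn : 0 ≤ ∫ u, |g u| ∂η := integral_nonneg fun u => abs_nonneg _
  calc ∫ u, |g u| ∂η = ((∫ u, |g u| ∂η) ^ p) ^ (1/p) := by
        rw [one_div, Real.rpow_rpow_inv hnn hp0.ne']
    _ ≤ (∫ u, |g u| ^ p ∂η) ^ (1/p) :=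
        Real.rpow_le_rpow (Real.rpow_nonneg hnn p) hJ (by positivity)

lemma aux_Lp {X δ : U → ℝ} {c e Mδ p : ℝ}
    (hX : Measurable X) (hδ : Measurable δ) (hc : 0 ≤ c) (he : 0 ≤ e)
    (hMδ : ∀ u, |δ u| ≤ Mδ)
    (hpt : ∀ u, |X u| ≤ c + e * |δ u|) (hp : 1 ≤ p) :
    (∫ u, |X u| ^ p ∂η) ^ (1/p) ≤ 2*c + 2*e*(∫ u, |δ u| ^ p ∂η) ^ (1/p) := by
  have hp0 : 0 < p := lt_of_lt_of_le one_pos hp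
  set M' := max Mδ 0 with hM'
  have hMδ' : ∀ u, |δ u| ≤ M' := fun u => (hMδ u).trans (le_max_left _ _)
  have hδpmeas : Measurable fun u => |δ u| ^ p :=
    (Real.continuous_rpow_const hp0.le).measurable.comp hδ.abs
  have hδpint : Integrable (fun u => |δ u| ^ p) η :=
    aux_integ η hδpmeas (fun u => by
      rw [abs_of_nonneg (Real.rpow_nonneg (abs_nonneg _) p)]
      exact Real.rpow_le_rpow (abs_nonneg _) (hMδ' u) hp0.le)
  have hintnn : 0 ≤ ∫ u, |δ u| ^ p ∂η :=
    integral_nonneg fun u => Real.rpow_nonneg (abs_nonneg _) p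
  set D := (∫ u, |δ u| ^ p ∂η) ^ (1/p) with hDdef
  have hD0 : 0 ≤ D := Real.rpow_nonneg hintnn _
  have hDp : D ^ p = ∫ u, |δ u| ^ p ∂η := by
    rw [hDdef, one_div, Real.rpow_inv_rpow hintnn hp0.ne']
  have hXpmeas : Measurable fun u => |X u| ^ p :=
    (Real.continuous_rpow_const hp0.le).measurable.comp hX.abs
  have hXpint : Integrable (fun u => |X u| ^ p) η := by
    refine aux_integ η (M := (c + e * M') ^ p) hXpmeas (fun u => ?_)
    rw [abs_of_nonneg (Real.rpow_nonneg (abs_nonneg _) p)]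
    refine Real.rpow_le_rpow (abs_nonneg _) ((hpt u).trans ?_) hp0.le
    exact add_le_add le_rfl (mul_le_mul_of_nonneg_left (hMδ' u) he)
  have hXnn : 0 ≤ ∫ u, |X u| ^ p ∂η :=
    integral_nonneg fun u => Real.rpow_nonneg (abs_nonneg _) p
  have hptp : ∀ u, |X u| ^ p ≤ 2^p*c^p + (2^p*e^p) * |δ u| ^ p := by
    intro u
    calc |X u| ^ p ≤ (c + e * |δ u|) ^ p :=
          Real.rpow_le_rpow (abs_nonneg _) (hpt u) hp0.le
      _ ≤ 2 ^ p * (c ^ p + (e * |δ u|) ^ p) :=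
          aux_rpow_two hp hc (mul_nonneg he (abs_nonneg _))
      _ = 2^p*c^p + (2^p*e^p) * |δ u| ^ p := by
          rw [Real.mul_rpow he (abs_nonneg _)]; ring
  have h1 : ∫ u, |X u| ^ p ∂η ≤ 2^p*c^p + (2^p*e^p) * ∫ u, |δ u| ^ p ∂η := by
    calc ∫ u, |X u| ^ p ∂η
        ≤ ∫ u, (2^p*c^p + (2^p*e^p) * |δ u| ^ p) ∂η :=
          integral_mono hXpint
            ((integrable_const _).add (hδpint.const_mul _)) hptp
      _ = 2^p*c^p + (2^p*e^p) * ∫ u, |δ u| ^ p ∂η := aux_intlin η _ _ hδpint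
  have h2 : 2^p*c^p + (2^p*e^p) * ∫ u, |δ u| ^ p ∂η = (2*c)^p + (2*e*D)^p := by
    have e1 : (2*c)^p = 2^p*c^p := Real.mul_rpow (by norm_num) hc
    have e2 : (2*e*D)^p = 2^p*e^p*D^p := by
      rw [Real.mul_rpow (by positivity) hD0, Real.mul_rpow (by norm_num) he]
    rw [e1, e2, hDp]
  calc (∫ u, |X u| ^ p ∂η) ^ (1/p)
      ≤ ((2*c)^p + (2*e*D)^p) ^ (1/p) :=
        Real.rpow_le_rpow hXnn (h1.trans_eq h2) (by positivity)
    _ ≤ ((2*c + 2*e*D)^p) ^ (1/p) :=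
        Real.rpow_le_rpow (by positivity) (aux_rpow_add_le hp (by positivity) (by positivity)) (by positivity)
    _ = 2*c + 2*e*D := by
        rw [one_div, Real.rpow_rpow_inv (by positivity) hp0.ne']

end Aux


/-- The replicator interaction term `f^J`. -/
noncomputable def replicatorField {U : Type*} [MeasurableSpace U] {d : ℕ}
    (η : Measure U)
    (J : EuclideanSpace ℝ (Fin d) → U → EuclideanSpace ℝ (Fin d) → U → ℝ)
    (x : EuclideanSpace ℝ (Fin d)) (σ : U → ℝ)
    (x' : EuclideanSpace ℝ (Fin d)) (σ' : U → ℝ) (u : U) : ℝ :=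
  ((∫ u', J x u x' u' * σ' u' ∂η)
    - ∫ v, (∫ u', J x v x' u' * σ' u' ∂η) * σ v ∂η) * σ u

set_option maxHeartbeats 1000000 in
/-- `f^J` is Lipschitz in all four arguments with respect to the `L^p_η` norm. -/
theorem replicatorField_lipschitz
    {U : Type*} [MetricSpace U] [CompactSpace U] [MeasurableSpace U] [BorelSpace U]
    {d : ℕ} (η : Measure U) [IsProbabilityMeasure η]
    (a b : ℝ) (ha : 0 < a) (ha1 : a < 1) (hb : 1 < b)
    (J : EuclideanSpace ℝ (Fin d) → U → EuclideanSpace ℝ (Fin d) → U → ℝ)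
    (MJ K : ℝ) (hMJ : 0 ≤ MJ) (hK : 0 ≤ K)
    (hJb : ∀ x u x' u', |J x u x' u'| ≤ MJ)
    (hJL : ∀ x₁ x₂ u₁ u₂ x₁' x₂' u₁' u₂',
      |J x₁ u₁ x₁' u₁' - J x₂ u₂ x₂' u₂'|
        ≤ K * (‖x₁ - x₂‖ + dist u₁ u₂ + ‖x₁' - x₂'‖ + dist u₁' u₂')) :
    ∃ L : ℝ, 0 < L ∧
      ∀ (p : ℝ), 1 ≤ p →
      ∀ (x₁ x₂ x₁' x₂' : EuclideanSpace ℝ (Fin d)) (σ₁ σ₂ σ₁' σ₂' : U → ℝ),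
        Measurable σ₁ → Measurable σ₂ → Measurable σ₁' → Measurable σ₂' →
        (∀ u, σ₁ u ∈ Set.Icc a b) → (∀ u, σ₂ u ∈ Set.Icc a b) →
        (∀ u, σ₁' u ∈ Set.Icc a b) → (∀ u, σ₂' u ∈ Set.Icc a b) →
        (∫ u, σ₁ u ∂η) = 1 → (∫ u, σ₂ u ∂η) = 1 →
        (∫ u, σ₁' u ∂η) = 1 → (∫ u, σ₂' u ∂η) = 1 →
        (∫ u, |replicatorField η J x₂ σ₂ x₂' σ₂' u
              - replicatorField η J x₁ σ₁ x₁' σ₁' u| ^ p ∂η) ^ (1 / p)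
          ≤ L * (‖x₂ - x₁‖ + (∫ u, |σ₂ u - σ₁ u| ^ p ∂η) ^ (1 / p)
              + ‖x₂' - x₁'‖ + (∫ u, |σ₂' u - σ₁' u| ^ p ∂η) ^ (1 / p)) := by
  have hb0 : (0:ℝ) < b := lt_trans one_pos hb
  have hKb : (0:ℝ) ≤ K * b := mul_nonneg hK hb0.le
  have hMJb : (0:ℝ) ≤ MJ * b := mul_nonneg hMJ hb0.le
  have h1b : (0:ℝ) ≤ 1 + b := by linarith
  have h2b1b : (0:ℝ) ≤ 2*b*(1+b) := by nlinarith
  set LL : ℝ := 2*b*(1+b)*(K*b + MJ) + 4*MJ*b*(1+b) + 1 with hLLdef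
  have q0 : (0:ℝ) ≤ 2*b*(1+b)*(K*b) := mul_nonneg h2b1b hKb
  have q1 : (0:ℝ) ≤ 2*b*(1+b)*MJ := mul_nonneg h2b1b hMJ
  have q2 : (0:ℝ) ≤ 4*MJ*b*(1+b) := by nlinarith
  have hLL0 : 0 < LL := by rw [hLLdef]; nlinarith
  refine ⟨LL, hLL0, ?_⟩
  intro p hp x₁ x₂ x₁' x₂' σ₁ σ₂ σ₁' σ₂' hm₁ hm₂ hm₁' hm₂' hr₁ hr₂ hr₁' hr₂' _ _ _ _
  have hp0 : (0:ℝ) < p := lt_of_lt_of_le one_pos hp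
  -- bounds on σ
  have hσ₁b : ∀ u, |σ₁ u| ≤ b := fun u => abs_le.mpr ⟨by linarith [(hr₁ u).1], (hr₁ u).2⟩
  have hσ₂b : ∀ u, |σ₂ u| ≤ b := fun u => abs_le.mpr ⟨by linarith [(hr₂ u).1], (hr₂ u).2⟩
  have hσ₁'b : ∀ u, |σ₁' u| ≤ b := fun u => abs_le.mpr ⟨by linarith [(hr₁' u).1], (hr₁' u).2⟩
  have hσ₂'b : ∀ u, |σ₂' u| ≤ b := fun u => abs_le.mpr ⟨by linarith [(hr₂' u).1], (hr₂' u).2⟩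
  -- continuity of J in the last U variable
  have hJc4 : ∀ x (u : U) x', Continuous fun u' => J x u x' u' := by
    intro x u x'
    refine LipschitzWith.continuous (K := (⟨K, hK⟩ : NNReal)) ?_
    refine lipschitzWith_iff_dist_le_mul.mpr ?_
    intro u₁' u₂'
    rw [Real.dist_eq]
    have h := hJL x x u u x' x' u₁' u₂'
    simp only [sub_self, norm_zero, dist_self] at h
    calc |J x u x' u₁' - J x u x' u₂'| ≤ K * (0 + 0 + 0 + dist u₁' u₂') := h
      _ = (⟨K, hK⟩ : NNReal) * dist u₁' u₂' := by simp
  -- inner integrand facts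
  have hinner_meas : ∀ x (u : U) x' (σ' : U → ℝ), Measurable σ' →
      Measurable (fun u' => J x u x' u' * σ' u') :=
    fun x u x' σ' hm => ((hJc4 x u x').measurable).mul hm
  have hinner_bd : ∀ x (u : U) x' (σ' : U → ℝ), (∀ v, |σ' v| ≤ b) →
      ∀ u', |J x u x' u' * σ' u'| ≤ MJ * b := fun x u x' σ' hσ u' => by
    rw [abs_mul]; exact mul_le_mul (hJb _ _ _ _) (hσ u') (abs_nonneg _) hMJ
  have hinner_int : ∀ x (u : U) x' (σ' : U → ℝ), Measurable σ' → (∀ v, |σ' v| ≤ b) →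
      Integrable (fun u' => J x u x' u' * σ' u') η :=
    fun x u x' σ' hm hσ => aux_integ η (hinner_meas x u x' σ' hm) (hinner_bd x u x' σ' hσ)
  -- continuity (hence measurability) of the A functions
  have hAcont : ∀ x x' (σ' : U → ℝ), Measurable σ' → (∀ v, |σ' v| ≤ b) →
      Continuous fun u => ∫ u', J x u x' u' * σ' u' ∂η := by
    intro x x' σ' hm hσ
    refine LipschitzWith.continuous (K := (⟨K * b, hKb⟩ : NNReal)) ?_
    refine lipschitzWith_iff_dist_le_mul.mpr ?_
    intro u₁ u₂
    rw [Real.dist_eq, ← integral_sub (hinner_int x u₁ x' σ' hm hσ) (hinner_int x u₂ x' σ' hm hσ)]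
    have hkey : |∫ u', (J x u₁ x' u' * σ' u' - J x u₂ x' u' * σ' u') ∂η| ≤ K * b * dist u₁ u₂ := by
      refine aux_key η ((hinner_meas x u₁ x' σ' hm).sub (hinner_meas x u₂ x' σ' hm)) ?_
      intro u'
      have e : J x u₁ x' u' * σ' u' - J x u₂ x' u' * σ' u'
          = (J x u₁ x' u' - J x u₂ x' u') * σ' u' := by ring
      rw [e, abs_mul]
      have h := hJL x x u₁ u₂ x' x' u' u'
      simp only [sub_self, norm_zero, dist_self] at h
      calc |J x u₁ x' u' - J x u₂ x' u'| * |σ' u'|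
          ≤ (K * dist u₁ u₂) * b := by
            refine mul_le_mul ?_ (hσ u') (abs_nonneg _) (by positivity)
            calc |J x u₁ x' u' - J x u₂ x' u'| ≤ K * (0 + dist u₁ u₂ + 0 + 0) := h
              _ = K * dist u₁ u₂ := by ring
        _ = K * b * dist u₁ u₂ := by ring
    calc |∫ u', (J x u₁ x' u' * σ' u' - J x u₂ x' u' * σ' u') ∂η|
        ≤ K * b * dist u₁ u₂ := hkey
      _ = (⟨K * b, hKb⟩ : NNReal) * dist u₁ u₂ := by simp
  -- bounds on the A functions
  have hAbd : ∀ x x' (σ' : U → ℝ), Measurable σ' → (∀ v, |σ' v| ≤ b) →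
      ∀ u, |∫ u', J x u x' u' * σ' u' ∂η| ≤ MJ * b :=
    fun x x' σ' hm hσ u => aux_key η (hinner_meas x u x' σ' hm) (hinner_bd x u x' σ' hσ)
  -- difference of σ's
  have hδmeas : Measurable fun u => σ₂ u - σ₁ u := hm₂.sub hm₁
  have hδ'meas : Measurable fun u => σ₂' u - σ₁' u := hm₂'.sub hm₁'
  have hδbd : ∀ u, |σ₂ u - σ₁ u| ≤ 2 * b := fun u =>
    abs_le.mpr ⟨by linarith [(hr₂ u).1, (hr₁ u).2, ha], by linarith [(hr₂ u).2, (hr₁ u).1, ha]⟩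
  have hδ'bd : ∀ u, |σ₂' u - σ₁' u| ≤ 2 * b := fun u =>
    abs_le.mpr ⟨by linarith [(hr₂' u).1, (hr₁' u).2, ha], by linarith [(hr₂' u).2, (hr₁' u).1, ha]⟩
  have hδint : Integrable (fun u => |σ₂ u - σ₁ u|) η :=
    aux_integ η hδmeas.abs (fun u => by simpa [abs_abs] using hδbd u)
  have hδ'int : Integrable (fun u => |σ₂' u - σ₁' u|) η :=
    aux_integ η hδ'meas.abs (fun u => by simpa [abs_abs] using hδ'bd u)
  set I : ℝ := ∫ u, |σ₂ u - σ₁ u| ∂η with hIdef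
  set I' : ℝ := ∫ u, |σ₂' u - σ₁' u| ∂η with hI'def
  have hI0 : 0 ≤ I := integral_nonneg fun u => abs_nonneg _
  have hI'0 : 0 ≤ I' := integral_nonneg fun u => abs_nonneg _
  set n₁ : ℝ := ‖x₂ - x₁‖ with hn₁def
  set n₂ : ℝ := ‖x₂' - x₁'‖ with hn₂def
  have hn₁0 : 0 ≤ n₁ := norm_nonneg _
  have hn₂0 : 0 ≤ n₂ := norm_nonneg _
  set cA : ℝ := K * (n₁ + n₂) * b + MJ * I' with hcAdef
  have hcA0 : 0 ≤ cA := by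
    have e1 : 0 ≤ K * (n₁ + n₂) * b := by positivity
    have e2 : 0 ≤ MJ * I' := mul_nonneg hMJ hI'0
    rw [hcAdef]; linarith
  -- pointwise difference bound for A
  have hAd : ∀ u : U, |(∫ u', J x₂ u x₂' u' * σ₂' u' ∂η) - ∫ u', J x₁ u x₁' u' * σ₁' u' ∂η|
      ≤ cA := by
    intro u
    rw [← integral_sub (hinner_int x₂ u x₂' σ₂' hm₂' hσ₂'b) (hinner_int x₁ u x₁' σ₁' hm₁' hσ₁'b)]
    have hbint : Integrable (fun u' => K * (n₁ + n₂) * b + MJ * |σ₂' u' - σ₁' u'|) η := by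
      exact (integrable_const _).add (hδ'int.const_mul MJ)
    have hbfun : ∀ u', |J x₂ u x₂' u' * σ₂' u' - J x₁ u x₁' u' * σ₁' u'|
        ≤ K * (n₁ + n₂) * b + MJ * |σ₂' u' - σ₁' u'| := by
      intro u'
      have e : J x₂ u x₂' u' * σ₂' u' - J x₁ u x₁' u' * σ₁' u'
          = (J x₂ u x₂' u' - J x₁ u x₁' u') * σ₂' u'
            + J x₁ u x₁' u' * (σ₂' u' - σ₁' u') := by ring
      rw [e]
      refine (abs_add_le _ _).trans ?_
      rw [abs_mul, abs_mul]
      have hJd : |J x₂ u x₂' u' - J x₁ u x₁' u'| ≤ K * (n₁ + n₂) := by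
        have h := hJL x₂ x₁ u u x₂' x₁' u' u'
        simp only [dist_self] at h
        calc |J x₂ u x₂' u' - J x₁ u x₁' u'| ≤ K * (n₁ + 0 + n₂ + 0) := h
          _ = K * (n₁ + n₂) := by ring
      have h1 : |J x₂ u x₂' u' - J x₁ u x₁' u'| * |σ₂' u'| ≤ K * (n₁ + n₂) * b :=
        mul_le_mul hJd (hσ₂'b u') (abs_nonneg _) (by positivity)
      have h2 : |J x₁ u x₁' u'| * |σ₂' u' - σ₁' u'| ≤ MJ * |σ₂' u' - σ₁' u'| :=
        mul_le_mul_of_nonneg_right (hJb _ _ _ _) (abs_nonneg _)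
      linarith
    refine (aux_key2 η
      ((hinner_int x₂ u x₂' σ₂' hm₂' hσ₂'b).sub (hinner_int x₁ u x₁' σ₁' hm₁' hσ₁'b))
      hbint hbfun).trans ?_
    rw [aux_intlin η _ _ hδ'int]
  -- integrands A v * σ v
  have hABmeas₁ : Measurable fun v => (∫ u', J x₁ v x₁' u' * σ₁' u' ∂η) * σ₁ v :=
    ((hAcont x₁ x₁' σ₁' hm₁' hσ₁'b).measurable).mul hm₁
  have hABmeas₂ : Measurable fun v => (∫ u', J x₂ v x₂' u' * σ₂' u' ∂η) * σ₂ v :=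
    ((hAcont x₂ x₂' σ₂' hm₂' hσ₂'b).measurable).mul hm₂
  have hABbd₁ : ∀ v, |(∫ u', J x₁ v x₁' u' * σ₁' u' ∂η) * σ₁ v| ≤ MJ * b * b := fun v => by
    rw [abs_mul]
    exact mul_le_mul (hAbd x₁ x₁' σ₁' hm₁' hσ₁'b v) (hσ₁b v) (abs_nonneg _) hMJb
  have hABbd₂ : ∀ v, |(∫ u', J x₂ v x₂' u' * σ₂' u' ∂η) * σ₂ v| ≤ MJ * b * b := fun v => by
    rw [abs_mul]
    exact mul_le_mul (hAbd x₂ x₂' σ₂' hm₂' hσ₂'b v) (hσ₂b v) (abs_nonneg _) hMJb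
  have hABint₁ : Integrable (fun v => (∫ u', J x₁ v x₁' u' * σ₁' u' ∂η) * σ₁ v) η :=
    aux_integ η hABmeas₁ hABbd₁
  have hABint₂ : Integrable (fun v => (∫ u', J x₂ v x₂' u' * σ₂' u' ∂η) * σ₂ v) η :=
    aux_integ η hABmeas₂ hABbd₂
  have hB₁bd : |∫ v, (∫ u', J x₁ v x₁' u' * σ₁' u' ∂η) * σ₁ v ∂η| ≤ MJ * b * b :=
    aux_key η hABmeas₁ hABbd₁
  -- bound on B₂ - B₁
  have hBd : |(∫ v, (∫ u', J x₂ v x₂' u' * σ₂' u' ∂η) * σ₂ v ∂η)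
      - ∫ v, (∫ u', J x₁ v x₁' u' * σ₁' u' ∂η) * σ₁ v ∂η| ≤ cA * b + MJ * b * I := by
    rw [← integral_sub hABint₂ hABint₁]
    have hbint : Integrable (fun v => cA * b + MJ * b * |σ₂ v - σ₁ v|) η := by
      exact (integrable_const _).add (hδint.const_mul (MJ * b))
    have hbfun : ∀ v, |(∫ u', J x₂ v x₂' u' * σ₂' u' ∂η) * σ₂ v
        - (∫ u', J x₁ v x₁' u' * σ₁' u' ∂η) * σ₁ v|
        ≤ cA * b + MJ * b * |σ₂ v - σ₁ v| := by
      intro v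
      have e : (∫ u', J x₂ v x₂' u' * σ₂' u' ∂η) * σ₂ v
          - (∫ u', J x₁ v x₁' u' * σ₁' u' ∂η) * σ₁ v
          = ((∫ u', J x₂ v x₂' u' * σ₂' u' ∂η) - ∫ u', J x₁ v x₁' u' * σ₁' u' ∂η) * σ₂ v
            + (∫ u', J x₁ v x₁' u' * σ₁' u' ∂η) * (σ₂ v - σ₁ v) := by ring
      rw [e]
      refine (abs_add_le _ _).trans ?_
      rw [abs_mul, abs_mul]
      have h1 := mul_le_mul (hAd v) (hσ₂b v) (abs_nonneg _) hcA0
      have h2 := mul_le_mul_of_nonneg_right (hAbd x₁ x₁' σ₁' hm₁' hσ₁'b v)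
        (abs_nonneg (σ₂ v - σ₁ v))
      have h3 : MJ * b * |σ₂ v - σ₁ v| = (MJ * b) * |σ₂ v - σ₁ v| := by ring
      linarith
    refine (aux_key2 η (hABint₂.sub hABint₁) hbint hbfun).trans ?_
    rw [aux_intlin η _ _ hδint]
  -- pointwise bound on the difference of the replicator fields
  set cC : ℝ := (cA + (cA * b + MJ * b * I)) * b with hcCdef
  set cE : ℝ := MJ * b + MJ * b * b with hcEdef
  have hcC0 : 0 ≤ cC := by
    have e1 : 0 ≤ cA * b := mul_nonneg hcA0 hb0.le
    have e2 : 0 ≤ MJ * b * I := mul_nonneg hMJb hI0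
    rw [hcCdef]
    exact mul_nonneg (by linarith) hb0.le
  have hcE0 : 0 ≤ cE := by
    have e2 : 0 ≤ MJ * b * b := mul_nonneg hMJb hb0.le
    rw [hcEdef]; linarith
  have hpt : ∀ u, |replicatorField η J x₂ σ₂ x₂' σ₂' u - replicatorField η J x₁ σ₁ x₁' σ₁' u|
      ≤ cC + cE * |σ₂ u - σ₁ u| := by
    intro u
    simp only [replicatorField]
    have e : ((∫ u', J x₂ u x₂' u' * σ₂' u' ∂η)
          - ∫ v, (∫ u', J x₂ v x₂' u' * σ₂' u' ∂η) * σ₂ v ∂η) * σ₂ u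
        - ((∫ u', J x₁ u x₁' u' * σ₁' u' ∂η)
          - ∫ v, (∫ u', J x₁ v x₁' u' * σ₁' u' ∂η) * σ₁ v ∂η) * σ₁ u
        = (((∫ u', J x₂ u x₂' u' * σ₂' u' ∂η) - ∫ u', J x₁ u x₁' u' * σ₁' u' ∂η)
            - ((∫ v, (∫ u', J x₂ v x₂' u' * σ₂' u' ∂η) * σ₂ v ∂η)
              - ∫ v, (∫ u', J x₁ v x₁' u' * σ₁' u' ∂η) * σ₁ v ∂η)) * σ₂ u
          + ((∫ u', J x₁ u x₁' u' * σ₁' u' ∂η)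
              - ∫ v, (∫ u', J x₁ v x₁' u' * σ₁' u' ∂η) * σ₁ v ∂η) * (σ₂ u - σ₁ u) := by
      ring
    rw [e]
    refine (abs_add_le _ _).trans ?_
    rw [abs_mul, abs_mul]
    have h1 : |((∫ u', J x₂ u x₂' u' * σ₂' u' ∂η) - ∫ u', J x₁ u x₁' u' * σ₁' u' ∂η)
        - ((∫ v, (∫ u', J x₂ v x₂' u' * σ₂' u' ∂η) * σ₂ v ∂η)
          - ∫ v, (∫ u', J x₁ v x₁' u' * σ₁' u' ∂η) * σ₁ v ∂η)|
        ≤ cA + (cA * b + MJ * b * I) := by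
      refine (abs_sub _ _).trans ?_
      exact add_le_add (hAd u) hBd
    have h2 : |(∫ u', J x₁ u x₁' u' * σ₁' u' ∂η)
        - ∫ v, (∫ u', J x₁ v x₁' u' * σ₁' u' ∂η) * σ₁ v ∂η| ≤ cE := by
      refine (abs_sub _ _).trans ?_
      rw [hcEdef]
      exact add_le_add (hAbd x₁ x₁' σ₁' hm₁' hσ₁'b u) hB₁bd
    have h3 := mul_le_mul h1 (hσ₂b u) (abs_nonneg _) (by positivity)
    have h4 := mul_le_mul_of_nonneg_right h2 (abs_nonneg (σ₂ u - σ₁ u))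
    rw [hcCdef]
    linarith
  -- measurability of the difference of the replicator fields
  have hXmeas : Measurable fun u =>
      replicatorField η J x₂ σ₂ x₂' σ₂' u - replicatorField η J x₁ σ₁ x₁' σ₁' u := by
    simp only [replicatorField]
    exact ((((hAcont x₂ x₂' σ₂' hm₂' hσ₂'b).measurable).sub measurable_const).mul hm₂).sub
      ((((hAcont x₁ x₁' σ₁' hm₁' hσ₁'b).measurable).sub measurable_const).mul hm₁)
  -- apply the Lp lemma
  refine le_trans (aux_Lp η (Mδ := 2 * b) hXmeas hδmeas hcC0 hcE0 hδbd hpt hp) ?_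
  -- final arithmetic
  set D : ℝ := (∫ u, |σ₂ u - σ₁ u| ^ p ∂η) ^ (1 / p) with hDdef
  set D' : ℝ := (∫ u, |σ₂' u - σ₁' u| ^ p ∂η) ^ (1 / p) with hD'def
  have hD0 : 0 ≤ D := Real.rpow_nonneg
    (integral_nonneg fun u => Real.rpow_nonneg (abs_nonneg _) p) _
  have hD'0 : 0 ≤ D' := Real.rpow_nonneg
    (integral_nonneg fun u => Real.rpow_nonneg (abs_nonneg _) p) _
  have hID : I ≤ D := aux_jensen η (M := 2*b) hδmeas hδbd hp
  have hI'D' : I' ≤ D' := aux_jensen η (M := 2*b) hδ'meas hδ'bd hp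
  have hcAD : cA ≤ K * (n₁ + n₂) * b + MJ * D' := by
    have := mul_le_mul_of_nonneg_left hI'D' hMJ
    rw [hcAdef]; linarith
  have hMJbb : (0:ℝ) ≤ 2*(MJ*b)*b := by nlinarith
  have t1 := mul_le_mul_of_nonneg_left hcAD h2b1b
  have t2 := mul_le_mul_of_nonneg_left hID hMJbb
  have hco1L : 2*b*(1+b)*(K*b) ≤ LL := by rw [hLLdef]; nlinarith
  have hco2L : 2*b*(1+b)*MJ ≤ LL := by rw [hLLdef]; nlinarith
  have hco3L : 2*MJ*b*b + 2*MJ*b*(1+b) ≤ LL := by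
    have q3 : 0 ≤ MJ * b * (1+b) := mul_nonneg hMJb h1b
    rw [hLLdef]; nlinarith
  calc 2*cC + 2*cE*D
      = 2*b*(1+b)*cA + 2*(MJ*b)*b*I + 2*(MJ*b)*(1+b)*D := by
        rw [hcCdef, hcEdef]; ring
    _ ≤ 2*b*(1+b)*(K * (n₁ + n₂) * b + MJ * D') + 2*(MJ*b)*b*D + 2*(MJ*b)*(1+b)*D := by
        linarith
    _ = (2*b*(1+b)*(K*b))*n₁ + (2*b*(1+b)*(K*b))*n₂ + (2*b*(1+b)*MJ)*D'
          + (2*MJ*b*b + 2*MJ*b*(1+b))*D := by ring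
    _ ≤ LL*n₁ + LL*n₂ + LL*D' + LL*D := by
        have s1 := mul_le_mul_of_nonneg_right hco1L hn₁0
        have s2 := mul_le_mul_of_nonneg_right hco1L hn₂0
        have s3 := mul_le_mul_of_nonneg_right hco2L hD'0
        have s4 := mul_le_mul_of_nonneg_right hco3L hD0
        linarith
    _ = LL * (n₁ + D + n₂ + D') := by ring
end

section
/- Let U be a measurable space with probability measure η, ε > 0, and for a bounded measurable g : U → ℝ define the energy G(σ) = ∫_U [−g(u)σ(u) + ε(σ(u)log σ(u) − σ(u) + 1)] dη(u) over probability densities σ with respect to η taking values in [a,b] with 0 < a < b. Suppose the Gibbs density σ*(u) = exp(g(u)/ε)/∫_U exp(g(v)/ε) dη(v) satisfies a ≤ σ*(u) ≤ b for all u. Then σ* is the unique minimizer of G over the set S_{a,b} of such densities, and for every σ ∈ S_{a,b}, (c/2)‖σ − σ*‖²_{L²_η} ≤ G(σ) − G(σ*), where c > 0 is any lower bound for ε/s over s ∈ [a,b] (e.g. c = ε/b). -/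
open MeasureTheory Real Set

lemma abs_log_le' {a b x : ℝ} (ha : 0 < a) (hx : x ∈ Set.Icc a b) :
    |Real.log x| ≤ |Real.log a| + |Real.log b| := by
  have hx0 : 0 < x := lt_of_lt_of_le ha hx.1
  have h1 : Real.log a ≤ Real.log x := Real.log_le_log ha hx.1
  have h2 : Real.log x ≤ Real.log b := Real.log_le_log hx0 hx.2
  have h3 := le_abs_self (Real.log b)
  have h4 := neg_abs_le (Real.log a)
  have h5 := abs_nonneg (Real.log a)
  have h6 := abs_nonneg (Real.log b)
  rcases abs_cases (Real.log x) with ⟨he, _⟩ | ⟨he, _⟩ <;> rw [he] <;> linarith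

lemma integrable_of_bound' {U : Type*} [MeasurableSpace U] (η : Measure U)
    [IsProbabilityMeasure η] (f : U → ℝ) (hf : Measurable f) (C : ℝ)
    (h : ∀ u, |f u| ≤ C) : Integrable f η := by
  apply Integrable.mono' (integrable_const C) hf.aestronglyMeasurable
  filter_upwards with u using h u

lemma entropy_tangent {a b k s t : ℝ} (ha : 0 < a) (hkb : k ≤ 1 / b)
    (hs : s ∈ Set.Icc a b) (ht : t ∈ Set.Icc a b) :
    t * Real.log t + (Real.log t + 1) * (s - t) + k / 2 * (s - t) ^ 2 ≤ s * Real.log s := by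
  have hb : 0 < b := lt_of_lt_of_le ha (ht.1.trans ht.2)
  set h : ℝ → ℝ := fun x => x * Real.log x - k / 2 * x ^ 2 with hh
  have hder : ∀ x ∈ Set.Icc a b, HasDerivAt h (Real.log x + 1 - k * x) x := by
    intro x hx
    have hx0 : x ≠ 0 := (lt_of_lt_of_le ha hx.1).ne'
    have h1 := Real.hasDerivAt_mul_log hx0
    have h2 : HasDerivAt (fun y : ℝ => k / 2 * y ^ 2) (k * x) x := by
      have := (hasDerivAt_pow 2 x).const_mul (k / 2)
      exact this.congr_deriv (by ring)
    exact h1.sub h2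
  have hconv : ConvexOn ℝ (Set.Icc a b) h := by
    apply convexOn_of_hasDerivWithinAt2_nonneg (convex_Icc a b)
      (f' := fun x => Real.log x + 1 - k * x) (f'' := fun x => 1 / x - k)
    · exact fun x hx => ((hder x hx).continuousAt.continuousWithinAt)
    · intro x hx
      exact ((hder x (interior_subset hx)).hasDerivWithinAt)
    · intro x hx
      rw [interior_Icc] at hx
      have hx0 : x ≠ 0 := (ha.trans hx.1).ne'
      have : HasDerivAt (fun y : ℝ => Real.log y + 1 - k * y) (1 / x - k) x := by
        have h1 := (Real.hasDerivAt_log hx0).add_const 1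
        have h2 : HasDerivAt (fun y : ℝ => k * y) k x := by
          simpa using (hasDerivAt_id x).const_mul k
        exact (h1.sub h2).congr_deriv (by rw [one_div])
      exact this.hasDerivWithinAt
    · intro x hx
      rw [interior_Icc] at hx
      have hx0 : 0 < x := ha.trans hx.1
      have : k ≤ 1 / x := hkb.trans (one_div_le_one_div_of_le hx0 hx.2.le)
      linarith
  have hd := hder t ht
  rcases lt_trichotomy t s with hts | heq | hst
  · have hsl := hconv.le_slope_of_hasDerivAt ht hs hts hd
    rw [slope_def_field, le_div_iff₀ (by linarith)] at hsl
    simp only [hh] at hsl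
    nlinarith [hsl]
  · subst heq
    simp
  · have hsl := hconv.slope_le_of_hasDerivAt hs ht hst hd
    rw [slope_def_field, div_le_iff₀ (by linarith)] at hsl
    simp only [hh] at hsl
    nlinarith [hsl]

/-- The strategy energy `G`. -/
noncomputable def strategyEnergy {U : Type*} [MeasurableSpace U]
    (η : Measure U) (ε : ℝ) (g : U → ℝ) (σ : U → ℝ) : ℝ :=
  ∫ u, (-(g u) * σ u + ε * (σ u * Real.log (σ u) - σ u + 1)) ∂η

/-- The Gibbs density is the unique minimizer of the strategy energy over `S_{a,b}`,
with quadratic growth away from the minimizer. -/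
theorem gibbs_unique_minimizer_quadratic_growth
    {U : Type*} [MeasurableSpace U] (η : Measure U) [IsProbabilityMeasure η]
    (ε a b c : ℝ) (hε : 0 < ε) (ha : 0 < a) (hab : a < b)
    (g : U → ℝ) (hg : Measurable g) (M : ℝ) (hgb : ∀ u, |g u| ≤ M)
    (σstar : U → ℝ)
    (hσstar : ∀ u, σstar u = Real.exp (g u / ε) / ∫ v, Real.exp (g v / ε) ∂η)
    (hσstarb : ∀ u, σstar u ∈ Set.Icc a b)
    (hc : 0 < c) (hcb : ∀ s ∈ Set.Icc a b, c ≤ ε / s) :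
    (∀ σ : U → ℝ, Measurable σ → (∀ u, σ u ∈ Set.Icc a b) → (∫ u, σ u ∂η) = 1 →
      strategyEnergy η ε g σstar ≤ strategyEnergy η ε g σ) ∧
    (∀ σ : U → ℝ, Measurable σ → (∀ u, σ u ∈ Set.Icc a b) → (∫ u, σ u ∂η) = 1 →
      strategyEnergy η ε g σ = strategyEnergy η ε g σstar → σ =ᵐ[η] σstar) ∧
    (∀ σ : U → ℝ, Measurable σ → (∀ u, σ u ∈ Set.Icc a b) → (∫ u, σ u ∂η) = 1 →
      (c / 2) * ∫ u, (σ u - σstar u) ^ 2 ∂η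
        ≤ strategyEnergy η ε g σ - strategyEnergy η ε g σstar) := by
  have hb : 0 < b := ha.trans hab
  have hU : Nonempty U := by
    by_contra hne
    rw [not_nonempty_iff] at hne
    have h1 : (η Set.univ) = 1 := measure_univ
    rw [Set.univ_eq_empty_iff.mpr hne, measure_empty] at h1
    exact zero_ne_one h1
  have hM : 0 ≤ M := (abs_nonneg _).trans (hgb (Classical.arbitrary U))
  set Z : ℝ := ∫ v, Real.exp (g v / ε) ∂η with hZ
  have hmexp : Measurable (fun v => Real.exp (g v / ε)) :=
    Real.measurable_exp.comp (hg.div_const ε)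
  have hZint : Integrable (fun v => Real.exp (g v / ε)) η := by
    apply integrable_of_bound' η _ hmexp (Real.exp (M / ε))
    intro v
    rw [abs_of_pos (Real.exp_pos _)]
    apply Real.exp_le_exp.2
    have h1 : g v ≤ M := (le_abs_self _).trans (hgb v)
    gcongr
  have hZpos : 0 < Z := by
    have h1 : Real.exp (-M / ε) ≤ Z := by
      have hle : ∀ v, Real.exp (-M / ε) ≤ Real.exp (g v / ε) := by
        intro v
        apply Real.exp_le_exp.2
        have h1 := hgb v
        have h2 := neg_abs_le (g v)
        have h3 : -M ≤ g v := by linarith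
        gcongr
      have := integral_mono (integrable_const (Real.exp (-M / ε))) hZint hle
      simpa using this
    exact lt_of_lt_of_le (Real.exp_pos _) h1
  have hlog : ∀ u, Real.log (σstar u) = g u / ε - Real.log Z := by
    intro u
    rw [hσstar u, Real.log_div (Real.exp_ne_zero _) hZpos.ne', Real.log_exp]
  have hmσstar : Measurable σstar := by
    have : σstar = fun u => Real.exp (g u / ε) / Z := funext hσstar
    rw [this]
    exact hmexp.div_const _
  have hstar1 : (∫ u, σstar u ∂η) = 1 := by
    have : (∫ u, σstar u ∂η) = ∫ u, Real.exp (g u / ε) / Z ∂η := by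
      congr 1; funext u; exact hσstar u
    rw [this, integral_div, div_self hZpos.ne']
  set L : ℝ := |Real.log a| + |Real.log b| with hL
  set C : ℝ := M * b + ε * (b * L + b + 1) with hC
  have hmF : ∀ τ : U → ℝ, Measurable τ →
      Measurable (fun u => -(g u) * τ u + ε * (τ u * Real.log (τ u) - τ u + 1)) := by
    intro τ hτ
    exact (hg.neg.mul hτ).add
      ((((hτ.mul (Real.measurable_log.comp hτ)).sub hτ).add_const 1).const_mul ε)
  have hbnd : ∀ τ : U → ℝ, (∀ u, τ u ∈ Set.Icc a b) → ∀ u,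
      |(-(g u) * τ u + ε * (τ u * Real.log (τ u) - τ u + 1))| ≤ C := by
    intro τ hτ u
    obtain ⟨h1, h2⟩ := hτ u
    have hx0 : 0 < τ u := lt_of_lt_of_le ha h1
    have hxb : |τ u| ≤ b := by rw [abs_of_pos hx0]; exact h2
    have hLx : |Real.log (τ u)| ≤ L := abs_log_le' ha ⟨h1, h2⟩
    have hA : |(-(g u)) * τ u| ≤ M * b := by
      rw [abs_mul, abs_neg]
      exact mul_le_mul (hgb u) hxb (abs_nonneg _) hM
    have hB : |τ u * Real.log (τ u) - τ u + 1| ≤ b * L + b + 1 := by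
      have h3 : |τ u * Real.log (τ u)| ≤ b * L := by
        rw [abs_mul]
        exact mul_le_mul hxb hLx (abs_nonneg _) hb.le
      have h4 := abs_add_le (τ u * Real.log (τ u) - τ u) 1
      have h5 := abs_sub (τ u * Real.log (τ u)) (τ u)
      simp only [abs_one] at h4
      linarith
    calc |(-(g u) * τ u + ε * (τ u * Real.log (τ u) - τ u + 1))|
        ≤ |(-(g u)) * τ u| + |ε * (τ u * Real.log (τ u) - τ u + 1)| := abs_add_le _ _
      _ = |(-(g u)) * τ u| + ε * |τ u * Real.log (τ u) - τ u + 1| := by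
          rw [abs_mul ε, abs_of_pos hε]
      _ ≤ C := by
          have := mul_le_mul_of_nonneg_left hB hε.le
          rw [hC]; linarith
  have hintF : ∀ τ : U → ℝ, Measurable τ → (∀ u, τ u ∈ Set.Icc a b) →
      Integrable (fun u => -(g u) * τ u + ε * (τ u * Real.log (τ u) - τ u + 1)) η :=
    fun τ hτ hτb => integrable_of_bound' η _ (hmF τ hτ) C (hbnd τ hτb)
  have hintτ : ∀ τ : U → ℝ, Measurable τ → (∀ u, τ u ∈ Set.Icc a b) → Integrable τ η := by
    intro τ hτ hτb
    apply integrable_of_bound' η τ hτ b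
    intro u
    rw [abs_of_pos (lt_of_lt_of_le ha (hτb u).1)]
    exact (hτb u).2
  have hintsq : ∀ σ : U → ℝ, Measurable σ →
      (∀ u, σ u ∈ Set.Icc a b) → Integrable (fun u => (σ u - σstar u) ^ 2) η := by
    intro σ hσ hσb
    apply integrable_of_bound' η _ ((hσ.sub hmσstar).pow_const 2) ((b - a) ^ 2)
    intro u
    rw [abs_of_nonneg (sq_nonneg _)]
    have h1 := (hσb u).1; have h2 := (hσb u).2
    have h3 := (hσstarb u).1; have h4 := (hσstarb u).2
    apply sq_le_sq' <;> simp only [Pi.sub_apply] <;> linarith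
  -- the main quadratic growth estimate
  have main : ∀ σ : U → ℝ, Measurable σ → (∀ u, σ u ∈ Set.Icc a b) → (∫ u, σ u ∂η) = 1 →
      (c / 2) * ∫ u, (σ u - σstar u) ^ 2 ∂η
        ≤ strategyEnergy η ε g σ - strategyEnergy η ε g σstar := by
    intro σ hσm hσb hσ1
    have hint1 := hintF σ hσm hσb
    have hint2 := hintF σstar hmσstar hσstarb
    have hintS := hintsq σ hσm hσb
    have hintlin : Integrable (fun u => (-(ε * Real.log Z)) * (σ u - σstar u)) η :=
      ((hintτ σ hσm hσb).sub (hintτ σstar hmσstar hσstarb)).const_mul _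
    have hk : c / ε ≤ 1 / b := by
      rw [div_le_div_iff₀ hε hb]
      have := hcb b ⟨hab.le, le_refl b⟩
      rw [le_div_iff₀ hb] at this
      linarith
    have key : ∀ u,
        (-(g u) * σstar u + ε * (σstar u * Real.log (σstar u) - σstar u + 1))
          + ((-(ε * Real.log Z)) * (σ u - σstar u) + c / 2 * (σ u - σstar u) ^ 2)
        ≤ -(g u) * σ u + ε * (σ u * Real.log (σ u) - σ u + 1) := by
      intro u
      set s := σ u
      set t := σstar u
      have hE := entropy_tangent (k := c / ε) ha hk (hσb u) (hσstarb u)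
      have e1 : ε * Real.log t = g u - ε * Real.log Z := by
        rw [hlog u]
        field_simp
      have hE2 : ε * (t * Real.log t + (Real.log t + 1) * (s - t)) + c / 2 * (s - t) ^ 2
          ≤ ε * (s * Real.log s) := by
        have h := mul_le_mul_of_nonneg_left hE hε.le
        have e : ε * (c / ε / 2 * (s - t) ^ 2) = c / 2 * (s - t) ^ 2 := by
          field_simp
        nlinarith [h, e]
      have e2 : (ε * Real.log t) * (s - t) = (g u - ε * Real.log Z) * (s - t) := by rw [e1]
      nlinarith [hE2, e2]
    have hintsq2 : Integrable (fun u => c / 2 * (σ u - σstar u) ^ 2) η :=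
      hintS.const_mul (c / 2)
    have hintlinsq : Integrable
        (fun u => (-(ε * Real.log Z)) * (σ u - σstar u) + c / 2 * (σ u - σstar u) ^ 2) η :=
      hintlin.add hintsq2
    have hmono : (∫ u, ((-(g u) * σstar u + ε * (σstar u * Real.log (σstar u) - σstar u + 1))
          + ((-(ε * Real.log Z)) * (σ u - σstar u) + c / 2 * (σ u - σstar u) ^ 2)) ∂η)
        ≤ ∫ u, (-(g u) * σ u + ε * (σ u * Real.log (σ u) - σ u + 1)) ∂η :=
      integral_mono (hint2.add hintlinsq) hint1 (fun u => key u)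
    have hIlin : (∫ u, (-(ε * Real.log Z)) * (σ u - σstar u) ∂η) = 0 := by
      rw [integral_const_mul, integral_sub (hintτ σ hσm hσb) (hintτ σstar hmσstar hσstarb),
        hσ1, hstar1, sub_self, mul_zero]
    have hsplit : (∫ u, ((-(g u) * σstar u + ε * (σstar u * Real.log (σstar u) - σstar u + 1))
          + ((-(ε * Real.log Z)) * (σ u - σstar u) + c / 2 * (σ u - σstar u) ^ 2)) ∂η)
        = strategyEnergy η ε g σstar
          + ((∫ u, (-(ε * Real.log Z)) * (σ u - σstar u) ∂η)
            + ∫ u, c / 2 * (σ u - σstar u) ^ 2 ∂η) := by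
      rw [integral_add hint2 hintlinsq]
      congr 1
      exact integral_add hintlin hintsq2
    rw [hIlin, zero_add, integral_const_mul] at hsplit
    rw [hsplit] at hmono
    have : strategyEnergy η ε g σ = ∫ u, (-(g u) * σ u + ε * (σ u * Real.log (σ u) - σ u + 1)) ∂η := rfl
    linarith [hmono]
  refine ⟨?_, ?_, main⟩
  · intro σ h1 h2 h3
    have h := main σ h1 h2 h3
    have hnn : 0 ≤ ∫ u, (σ u - σstar u) ^ 2 ∂η := integral_nonneg (fun u => sq_nonneg _)
    nlinarith
  · intro σ h1 h2 h3 heq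
    have h := main σ h1 h2 h3
    have hnn : 0 ≤ ∫ u, (σ u - σstar u) ^ 2 ∂η := integral_nonneg (fun u => sq_nonneg _)
    have hz : (∫ u, (σ u - σstar u) ^ 2 ∂η) = 0 := by nlinarith [h, heq ▸ h]
    have := (integral_eq_zero_iff_of_nonneg (fun u => sq_nonneg _) (hintsq σ h1 h2)).1 hz
    filter_upwards [this] with u hu
    have hu' : (σ u - σstar u) ^ 2 = 0 := hu
    have := pow_eq_zero_iff (two_ne_zero) |>.1 hu'
    linarith [this]
end

section
/- Let U be a compact metric space with probability measure η, ε > 0, J : ℝ^d × U × ℝ^d → ℝ bounded Lipschitz with ‖J‖_∞ + Lip(J) ≤ M, and e : ℝ^d × U → ℝ^d bounded Lipschitz. For a probability measure μ on ℝ^d with finite first moment define σ^J(μ)(x,u) = exp((1/ε)∫ J(x,u,x')dμ(x')) / ∫_U exp((1/ε)∫ J(x,v,x')dμ(x')) dη(v) and v^J(μ)(x) = ∫_U e(x,u) σ^J(μ)(x,u) dη(u). Then there exists C = C(M, e, ε) such that for all μ, μ' with finite first moments and all x, x' ∈ ℝ^d: ‖v^J(μ)(x) − v^{J'}(μ')(x')‖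 ≤ C(W₁(μ,μ') + ‖J−J'‖_∞ + ‖x−x'‖), where J' also satisfies ‖J'‖_∞ + Lip(J') ≤ M. -/
open MeasureTheory Real

/-- The mean-field Gibbs strategy `σ^J(μ)(x,·)`. -/
noncomputable def mfGibbs {U : Type*} [MeasurableSpace U] {d : ℕ}
    (η : Measure U) (ε : ℝ)
    (J : EuclideanSpace ℝ (Fin d) → U → EuclideanSpace ℝ (Fin d) → ℝ)
    (μ : Measure (EuclideanSpace ℝ (Fin d)))
    (x : EuclideanSpace ℝ (Fin d)) (u : U) : ℝ :=
  Real.exp ((1 / ε) * ∫ y, J x u y ∂μ)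
    / ∫ v, Real.exp ((1 / ε) * ∫ y, J x v y ∂μ) ∂η

/-- The mean-field velocity `v^J(μ)(x)`. -/
noncomputable def mfVelocity {U : Type*} [MeasurableSpace U] {d : ℕ}
    (η : Measure U) (ε : ℝ)
    (J : EuclideanSpace ℝ (Fin d) → U → EuclideanSpace ℝ (Fin d) → ℝ)
    (e : EuclideanSpace ℝ (Fin d) → U → EuclideanSpace ℝ (Fin d))
    (μ : Measure (EuclideanSpace ℝ (Fin d)))
    (x : EuclideanSpace ℝ (Fin d)) : EuclideanSpace ℝ (Fin d) :=
  ∫ u, mfGibbs η ε J μ x u • e x u ∂η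

section Aux

variable {U : Type*} [MetricSpace U] [CompactSpace U] [MeasurableSpace U] [BorelSpace U]
  {d : ℕ}

lemma mfAux_exp_lip {b s t : ℝ} (hs : s ≤ b) (ht : t ≤ b) :
    |Real.exp s - Real.exp t| ≤ Real.exp b * |s - t| := by
  wlog h : t ≤ s generalizing s t
  · rw [abs_sub_comm, abs_sub_comm s t]; exact this ht hs (le_of_not_ge h)
  rw [abs_of_nonneg (sub_nonneg.2 (Real.exp_le_exp.2 h)), abs_of_nonneg (sub_nonneg.2 h)]
  have h1 : Real.exp s - Real.exp t = Real.exp s * (1 - Real.exp (t - s)) := by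
    rw [mul_sub, mul_one, ← Real.exp_add]; ring_nf
  have h2 : 1 - Real.exp (t - s) ≤ s - t := by
    have := Real.add_one_le_exp (t - s); linarith
  rw [h1]
  calc Real.exp s * (1 - Real.exp (t - s)) ≤ Real.exp s * (s - t) :=
        mul_le_mul_of_nonneg_left h2 (Real.exp_pos s).le
    _ ≤ Real.exp b * (s - t) :=
        mul_le_mul_of_nonneg_right (Real.exp_le_exp.2 hs) (by linarith)

lemma mfAux_abs_integral_le {E : Type*} [MeasurableSpace E] (μ : Measure E)
    [IsProbabilityMeasure μ] {f : E → ℝ} {c : ℝ} (h : ∀ y, |f y| ≤ c) :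
    |∫ y, f y ∂μ| ≤ c := by
  have := norm_integral_le_of_norm_le_const (μ := μ) (f := f) (C := c)
    (ae_of_all _ fun y => by simpa [Real.norm_eq_abs] using h y)
  simpa [Real.norm_eq_abs, measure_univ] using this

lemma mfAux_integrable {E : Type*} [MeasurableSpace E] (μ : Measure E)
    [IsFiniteMeasure μ] {f : E → ℝ} {c : ℝ} (hm : AEStronglyMeasurable f μ)
    (h : ∀ y, |f y| ≤ c) : Integrable f μ :=
  (integrable_const c).mono' hm (ae_of_all _ fun y => by simpa [Real.norm_eq_abs] using h y)

lemma mfAux_abs_integral_sub_le {E : Type*} [MeasurableSpace E] (μ : Measure E)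
    [IsProbabilityMeasure μ] {f g : E → ℝ} {c : ℝ}
    (hf : Integrable f μ) (hg : Integrable g μ) (h : ∀ y, |f y - g y| ≤ c) :
    |(∫ y, f y ∂μ) - ∫ y, g y ∂μ| ≤ c := by
  rw [← integral_sub hf hg]
  exact mfAux_abs_integral_le μ h

lemma mfAux_int_inner {M : ℝ} (hM : 0 < M)
    (K : EuclideanSpace ℝ (Fin d) → U → EuclideanSpace ℝ (Fin d) → ℝ)
    (hKb : ∀ y u y', |K y u y'| ≤ M)
    (hKL : ∀ y₁ y₂ u₁ u₂ y₁' y₂', |K y₁ u₁ y₁' - K y₂ u₂ y₂'|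
        ≤ M * (‖y₁ - y₂‖ + dist u₁ u₂ + ‖y₁' - y₂'‖))
    (ν : Measure (EuclideanSpace ℝ (Fin d))) [IsProbabilityMeasure ν]
    (z : EuclideanSpace ℝ (Fin d)) (u : U) :
    Integrable (fun y => K z u y) ν := by
  apply mfAux_integrable ν ?_ (fun y => hKb z u y)
  apply Continuous.aestronglyMeasurable
  apply LipschitzWith.continuous (K := M.toNNReal)
  apply LipschitzWith.of_dist_le_mul
  intro y₁ y₂
  rw [Real.dist_eq, dist_eq_norm, Real.coe_toNNReal M hM.le]
  calc |K z u y₁ - K z u y₂| ≤ M * (‖z - z‖ + dist u u + ‖y₁ - y₂‖) := hKL _ _ _ _ _ _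
    _ = M * ‖y₁ - y₂‖ := by simp

lemma mfAux_s_bound {ε M : ℝ} (hε : 0 < ε)
    (K : EuclideanSpace ℝ (Fin d) → U → EuclideanSpace ℝ (Fin d) → ℝ)
    (hKb : ∀ y u y', |K y u y'| ≤ M)
    (ν : Measure (EuclideanSpace ℝ (Fin d))) [IsProbabilityMeasure ν]
    (z : EuclideanSpace ℝ (Fin d)) (u : U) :
    |(1 / ε) * ∫ y, K z u y ∂ν| ≤ M / ε := by
  rw [abs_mul, abs_of_pos (by positivity : (0:ℝ) < 1 / ε)]
  calc (1 / ε) * |∫ y, K z u y ∂ν| ≤ (1 / ε) * M :=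
        mul_le_mul_of_nonneg_left (mfAux_abs_integral_le ν (hKb z u)) (by positivity)
    _ = M / ε := by ring

lemma mfAux_exp_bounds {ε M : ℝ} (hε : 0 < ε)
    (K : EuclideanSpace ℝ (Fin d) → U → EuclideanSpace ℝ (Fin d) → ℝ)
    (hKb : ∀ y u y', |K y u y'| ≤ M)
    (ν : Measure (EuclideanSpace ℝ (Fin d))) [IsProbabilityMeasure ν]
    (z : EuclideanSpace ℝ (Fin d)) (u : U) :
    (Real.exp (M / ε))⁻¹ ≤ Real.exp ((1 / ε) * ∫ y, K z u y ∂ν) ∧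
    Real.exp ((1 / ε) * ∫ y, K z u y ∂ν) ≤ Real.exp (M / ε) := by
  have h := abs_le.1 (mfAux_s_bound hε K hKb ν z u)
  constructor
  · rw [← Real.exp_neg]; exact Real.exp_le_exp.2 (by linarith [h.1])
  · exact Real.exp_le_exp.2 h.2

lemma mfAux_cont_u {ε M : ℝ} (hM : 0 < M)
    (K : EuclideanSpace ℝ (Fin d) → U → EuclideanSpace ℝ (Fin d) → ℝ)
    (hKb : ∀ y u y', |K y u y'| ≤ M)
    (hKL : ∀ y₁ y₂ u₁ u₂ y₁' y₂', |K y₁ u₁ y₁' - K y₂ u₂ y₂'|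
        ≤ M * (‖y₁ - y₂‖ + dist u₁ u₂ + ‖y₁' - y₂'‖))
    (ν : Measure (EuclideanSpace ℝ (Fin d))) [IsProbabilityMeasure ν]
    (z : EuclideanSpace ℝ (Fin d)) :
    Continuous (fun u : U => Real.exp ((1 / ε) * ∫ y, K z u y ∂ν)) := by
  apply Real.continuous_exp.comp
  apply Continuous.mul continuous_const
  apply LipschitzWith.continuous (K := M.toNNReal)
  apply LipschitzWith.of_dist_le_mul
  intro u₁ u₂
  rw [Real.dist_eq, Real.coe_toNNReal M hM.le]
  apply mfAux_abs_integral_sub_le ν (mfAux_int_inner hM K hKb hKL ν z u₁)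
    (mfAux_int_inner hM K hKb hKL ν z u₂)
  intro y
  calc |K z u₁ y - K z u₂ y| ≤ M * (‖z - z‖ + dist u₁ u₂ + ‖y - y‖) := hKL _ _ _ _ _ _
    _ = M * dist u₁ u₂ := by simp

lemma mfAux_int_exp (η : Measure U) [IsProbabilityMeasure η] {ε M : ℝ}
    (hε : 0 < ε) (hM : 0 < M)
    (K : EuclideanSpace ℝ (Fin d) → U → EuclideanSpace ℝ (Fin d) → ℝ)
    (hKb : ∀ y u y', |K y u y'| ≤ M)
    (hKL : ∀ y₁ y₂ u₁ u₂ y₁' y₂', |K y₁ u₁ y₁' - K y₂ u₂ y₂'|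
        ≤ M * (‖y₁ - y₂‖ + dist u₁ u₂ + ‖y₁' - y₂'‖))
    (ν : Measure (EuclideanSpace ℝ (Fin d))) [IsProbabilityMeasure ν]
    (z : EuclideanSpace ℝ (Fin d)) :
    Integrable (fun v => Real.exp ((1 / ε) * ∫ y, K z v y ∂ν)) η :=
  mfAux_integrable η (mfAux_cont_u hM K hKb hKL ν z).aestronglyMeasurable
    (fun v => by
      rw [abs_of_pos (Real.exp_pos _)]
      exact (mfAux_exp_bounds hε K hKb ν z v).2)

lemma mfAux_Z_bounds (η : Measure U) [IsProbabilityMeasure η] {ε M : ℝ}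
    (hε : 0 < ε) (hM : 0 < M)
    (K : EuclideanSpace ℝ (Fin d) → U → EuclideanSpace ℝ (Fin d) → ℝ)
    (hKb : ∀ y u y', |K y u y'| ≤ M)
    (hKL : ∀ y₁ y₂ u₁ u₂ y₁' y₂', |K y₁ u₁ y₁' - K y₂ u₂ y₂'|
        ≤ M * (‖y₁ - y₂‖ + dist u₁ u₂ + ‖y₁' - y₂'‖))
    (ν : Measure (EuclideanSpace ℝ (Fin d))) [IsProbabilityMeasure ν]
    (z : EuclideanSpace ℝ (Fin d)) :
    (Real.exp (M / ε))⁻¹ ≤ (∫ v, Real.exp ((1 / ε) * ∫ y, K z v y ∂ν) ∂η) ∧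
    (∫ v, Real.exp ((1 / ε) * ∫ y, K z v y ∂ν) ∂η) ≤ Real.exp (M / ε) := by
  constructor
  · have := integral_mono (μ := η) (integrable_const ((Real.exp (M / ε))⁻¹))
      (mfAux_int_exp η hε hM K hKb hKL ν z)
      (fun v => (mfAux_exp_bounds hε K hKb ν z v).1)
    simpa [measure_univ] using this
  · exact le_trans (le_abs_self _) (mfAux_abs_integral_le η (fun v => by
      rw [abs_of_pos (Real.exp_pos _)]
      exact (mfAux_exp_bounds hε K hKb ν z v).2))

lemma mfAux_gibbs_eq (η : Measure U) (ε : ℝ)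
    (K : EuclideanSpace ℝ (Fin d) → U → EuclideanSpace ℝ (Fin d) → ℝ)
    (ν : Measure (EuclideanSpace ℝ (Fin d)))
    (z : EuclideanSpace ℝ (Fin d)) (u : U) :
    mfGibbs η ε K ν z u = Real.exp ((1 / ε) * ∫ y, K z u y ∂ν)
      / ∫ v, Real.exp ((1 / ε) * ∫ y, K z v y ∂ν) ∂η := rfl

lemma mfAux_Z_pos (η : Measure U) [IsProbabilityMeasure η] {ε M : ℝ}
    (hε : 0 < ε) (hM : 0 < M)
    (K : EuclideanSpace ℝ (Fin d) → U → EuclideanSpace ℝ (Fin d) → ℝ)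
    (hKb : ∀ y u y', |K y u y'| ≤ M)
    (hKL : ∀ y₁ y₂ u₁ u₂ y₁' y₂', |K y₁ u₁ y₁' - K y₂ u₂ y₂'|
        ≤ M * (‖y₁ - y₂‖ + dist u₁ u₂ + ‖y₁' - y₂'‖))
    (ν : Measure (EuclideanSpace ℝ (Fin d))) [IsProbabilityMeasure ν]
    (z : EuclideanSpace ℝ (Fin d)) :
    0 < ∫ v, Real.exp ((1 / ε) * ∫ y, K z v y ∂ν) ∂η :=
  lt_of_lt_of_le (inv_pos.2 (Real.exp_pos _)) (mfAux_Z_bounds η hε hM K hKb hKL ν z).1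

lemma mfAux_gibbs_pos (η : Measure U) [IsProbabilityMeasure η] {ε M : ℝ}
    (hε : 0 < ε) (hM : 0 < M)
    (K : EuclideanSpace ℝ (Fin d) → U → EuclideanSpace ℝ (Fin d) → ℝ)
    (hKb : ∀ y u y', |K y u y'| ≤ M)
    (hKL : ∀ y₁ y₂ u₁ u₂ y₁' y₂', |K y₁ u₁ y₁' - K y₂ u₂ y₂'|
        ≤ M * (‖y₁ - y₂‖ + dist u₁ u₂ + ‖y₁' - y₂'‖))
    (ν : Measure (EuclideanSpace ℝ (Fin d))) [IsProbabilityMeasure ν]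
    (z : EuclideanSpace ℝ (Fin d)) (u : U) :
    0 < mfGibbs η ε K ν z u :=
  div_pos (Real.exp_pos _) (mfAux_Z_pos η hε hM K hKb hKL ν z)

lemma mfAux_gibbs_le (η : Measure U) [IsProbabilityMeasure η] {ε M : ℝ}
    (hε : 0 < ε) (hM : 0 < M)
    (K : EuclideanSpace ℝ (Fin d) → U → EuclideanSpace ℝ (Fin d) → ℝ)
    (hKb : ∀ y u y', |K y u y'| ≤ M)
    (hKL : ∀ y₁ y₂ u₁ u₂ y₁' y₂', |K y₁ u₁ y₁' - K y₂ u₂ y₂'|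
        ≤ M * (‖y₁ - y₂‖ + dist u₁ u₂ + ‖y₁' - y₂'‖))
    (ν : Measure (EuclideanSpace ℝ (Fin d))) [IsProbabilityMeasure ν]
    (z : EuclideanSpace ℝ (Fin d)) (u : U) :
    mfGibbs η ε K ν z u ≤ (Real.exp (M / ε)) ^ 2 := by
  rw [mfAux_gibbs_eq]
  calc Real.exp ((1 / ε) * ∫ y, K z u y ∂ν)
        / ∫ v, Real.exp ((1 / ε) * ∫ y, K z v y ∂ν) ∂η
      ≤ Real.exp (M / ε) / (Real.exp (M / ε))⁻¹ := by
        apply div_le_div₀ (Real.exp_pos (M / ε)).le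
          (mfAux_exp_bounds hε K hKb ν z u).2
          (inv_pos.2 (Real.exp_pos _))
          (mfAux_Z_bounds η hε hM K hKb hKL ν z).1
    _ = (Real.exp (M / ε)) ^ 2 := by
        rw [div_eq_mul_inv, inv_inv, sq]

lemma mfAux_gibbs_cont (η : Measure U) [IsProbabilityMeasure η] {ε M : ℝ}
    (hM : 0 < M)
    (K : EuclideanSpace ℝ (Fin d) → U → EuclideanSpace ℝ (Fin d) → ℝ)
    (hKb : ∀ y u y', |K y u y'| ≤ M)
    (hKL : ∀ y₁ y₂ u₁ u₂ y₁' y₂', |K y₁ u₁ y₁' - K y₂ u₂ y₂'|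
        ≤ M * (‖y₁ - y₂‖ + dist u₁ u₂ + ‖y₁' - y₂'‖))
    (ν : Measure (EuclideanSpace ℝ (Fin d))) [IsProbabilityMeasure ν]
    (z : EuclideanSpace ℝ (Fin d)) :
    Continuous (fun u => mfGibbs η ε K ν z u) := by
  have h : (fun u => mfGibbs η ε K ν z u) = fun u =>
      Real.exp ((1 / ε) * ∫ y, K z u y ∂ν)
        / ∫ v, Real.exp ((1 / ε) * ∫ y, K z v y ∂ν) ∂η := rfl
  rw [h]
  exact (mfAux_cont_u hM K hKb hKL ν z).div_const _

end Aux

/-- Lipschitz dependence of the mean-field velocity on the measure (through the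
Kantorovich dual bound `W`), the payoff function and the location. -/
theorem mfVelocity_lipschitz
    {U : Type*} [MetricSpace U] [CompactSpace U] [MeasurableSpace U] [BorelSpace U]
    {d : ℕ} (η : Measure U) [IsProbabilityMeasure η]
    (ε M Ke Me : ℝ) (hε : 0 < ε) (hM : 0 < M)
    (e : EuclideanSpace ℝ (Fin d) → U → EuclideanSpace ℝ (Fin d))
    (heb : ∀ x u, ‖e x u‖ ≤ Me)
    (heL : ∀ x₁ x₂ u₁ u₂, ‖e x₁ u₁ - e x₂ u₂‖ ≤ Ke * (‖x₁ - x₂‖ + dist u₁ u₂))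
    (hem : ∀ x, Measurable (e x)) :
    ∃ C : ℝ, 0 < C ∧
      ∀ (J J' : EuclideanSpace ℝ (Fin d) → U → EuclideanSpace ℝ (Fin d) → ℝ),
        (∀ y u y', |J y u y'| ≤ M) → (∀ y u y', |J' y u y'| ≤ M) →
        (∀ y₁ y₂ u₁ u₂ y₁' y₂', |J y₁ u₁ y₁' - J y₂ u₂ y₂'|
          ≤ M * (‖y₁ - y₂‖ + dist u₁ u₂ + ‖y₁' - y₂'‖)) →
        (∀ y₁ y₂ u₁ u₂ y₁' y₂', |J' y₁ u₁ y₁' - J' y₂ u₂ y₂'|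
          ≤ M * (‖y₁ - y₂‖ + dist u₁ u₂ + ‖y₁' - y₂'‖)) →
      ∀ (μ μ' : Measure (EuclideanSpace ℝ (Fin d))),
        IsProbabilityMeasure μ → IsProbabilityMeasure μ' →
        Integrable (fun y => ‖y‖) μ → Integrable (fun y => ‖y‖) μ' →
      ∀ (W D : ℝ),
        (∀ φ : EuclideanSpace ℝ (Fin d) → ℝ, LipschitzWith 1 φ →
          |(∫ y, φ y ∂μ) - ∫ y, φ y ∂μ'| ≤ W) →
        (∀ y u y', |J y u y' - J' y u y'| ≤ D) →
      ∀ x x' : EuclideanSpace ℝ (Fin d),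
        ‖mfVelocity η ε J e μ x - mfVelocity η ε J' e μ' x'‖
          ≤ C * (W + D + ‖x - x'‖) := by
  rcases isEmpty_or_nonempty U with hU | hU
  · refine ⟨1, one_pos, ?_⟩
    exfalso
    have h1 : η Set.univ = 1 := measure_univ
    rw [Set.univ_eq_empty_iff.mpr hU] at h1
    simp at h1
  obtain ⟨u₀⟩ := hU
  have ha : (0:ℝ) < Real.exp (M / ε) := Real.exp_pos _
  have hK1 : (0:ℝ) ≤ max M 1 := le_trans zero_le_one (le_max_right M 1)
  refine ⟨2 * |Me| * Real.exp (M / ε) ^ 4 * max M 1 / ε + Real.exp (M / ε) ^ 2 * |Ke| + 1,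
    ?_, ?_⟩
  · have h1 : (0:ℝ) ≤ 2 * |Me| * Real.exp (M / ε) ^ 4 * max M 1 / ε :=
      div_nonneg (mul_nonneg (by positivity) hK1) hε.le
    have h2 : (0:ℝ) ≤ Real.exp (M / ε) ^ 2 * |Ke| := by positivity
    linarith
  intro J J' hJb hJ'b hJL hJ'L μ μ' hμ hμ' hμm hμ'm W D hW hD x x'
  haveI := hμ; haveI := hμ'
  set T := W + D + ‖x - x'‖ with hTdef
  have hW0 : (0:ℝ) ≤ W := by
    have h := hW (fun _ => 0) ((LipschitzWith.const (0:ℝ)).weaken zero_le_one)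
    simpa using h
  have hD0 : (0:ℝ) ≤ D := le_trans (abs_nonneg _) (hD 0 u₀ 0)
  have hx0 : (0:ℝ) ≤ ‖x - x'‖ := norm_nonneg _
  have hT0 : (0:ℝ) ≤ T := by rw [hTdef]; linarith
  have hxT : ‖x - x'‖ ≤ T := by rw [hTdef]; linarith
  have hMe0 : (0:ℝ) ≤ Me := le_trans (norm_nonneg _) (heb 0 u₀)
  -- Key intermediate estimate
  have hkey : ∀ u : U, |(∫ y, J x u y ∂μ) - ∫ y, J' x' u y ∂μ'|
      ≤ D + M * ‖x - x'‖ + M * W := by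
    intro u
    have h1 : |(∫ y, J x u y ∂μ) - ∫ y, J' x u y ∂μ| ≤ D :=
      mfAux_abs_integral_sub_le μ (mfAux_int_inner hM J hJb hJL μ x u)
        (mfAux_int_inner hM J' hJ'b hJ'L μ x u) (fun y => hD x u y)
    have h2 : |(∫ y, J' x u y ∂μ) - ∫ y, J' x' u y ∂μ| ≤ M * ‖x - x'‖ := by
      apply mfAux_abs_integral_sub_le μ (mfAux_int_inner hM J' hJ'b hJ'L μ x u)
        (mfAux_int_inner hM J' hJ'b hJ'L μ x' u)
      intro y
      calc |J' x u y - J' x' u y| ≤ M * (‖x - x'‖ + dist u u + ‖y - y‖) := hJ'L _ _ _ _ _ _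
        _ = M * ‖x - x'‖ := by simp
    have h3 : |(∫ y, J' x' u y ∂μ) - ∫ y, J' x' u y ∂μ'| ≤ M * W := by
      have hφL : LipschitzWith 1 (fun y => M⁻¹ * J' x' u y) := by
        apply LipschitzWith.of_dist_le_mul
        intro y₁ y₂
        rw [Real.dist_eq, dist_eq_norm, NNReal.coe_one, one_mul]
        have h4 : |J' x' u y₁ - J' x' u y₂| ≤ M * ‖y₁ - y₂‖ := by
          calc |J' x' u y₁ - J' x' u y₂|
              ≤ M * (‖x' - x'‖ + dist u u + ‖y₁ - y₂‖) := hJ'L _ _ _ _ _ _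
            _ = M * ‖y₁ - y₂‖ := by simp
        calc |M⁻¹ * J' x' u y₁ - M⁻¹ * J' x' u y₂|
            = M⁻¹ * |J' x' u y₁ - J' x' u y₂| := by
              rw [← mul_sub, abs_mul, abs_of_pos (inv_pos.2 hM)]
          _ ≤ M⁻¹ * (M * ‖y₁ - y₂‖) := mul_le_mul_of_nonneg_left h4 (inv_pos.2 hM).le
          _ = ‖y₁ - y₂‖ := by field_simp
      have h5 := hW _ hφL
      rw [integral_const_mul, integral_const_mul, ← mul_sub, abs_mul,
        abs_of_pos (inv_pos.2 hM)] at h5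
      calc |(∫ y, J' x' u y ∂μ) - ∫ y, J' x' u y ∂μ'|
          = M * (M⁻¹ * |(∫ y, J' x' u y ∂μ) - ∫ y, J' x' u y ∂μ'|) := by
            rw [← mul_assoc, mul_inv_cancel₀ hM.ne', one_mul]
        _ ≤ M * W := mul_le_mul_of_nonneg_left h5 hM.le
    calc |(∫ y, J x u y ∂μ) - ∫ y, J' x' u y ∂μ'|
        ≤ |(∫ y, J x u y ∂μ) - ∫ y, J' x u y ∂μ|
          + |(∫ y, J' x u y ∂μ) - ∫ y, J' x' u y ∂μ'| := abs_sub_le _ _ _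
      _ ≤ |(∫ y, J x u y ∂μ) - ∫ y, J' x u y ∂μ|
          + (|(∫ y, J' x u y ∂μ) - ∫ y, J' x' u y ∂μ|
            + |(∫ y, J' x' u y ∂μ) - ∫ y, J' x' u y ∂μ'|) :=
          add_le_add le_rfl (abs_sub_le _ _ _)
      _ ≤ D + M * ‖x - x'‖ + M * W := by linarith
  have hB : D + M * ‖x - x'‖ + M * W ≤ max M 1 * T := by
    have e1 : (0:ℝ) ≤ (max M 1 - 1) * D :=
      mul_nonneg (by linarith [le_max_right M 1]) hD0
    have e2 : (0:ℝ) ≤ (max M 1 - M) * W :=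
      mul_nonneg (by linarith [le_max_left M 1]) hW0
    have e3 : (0:ℝ) ≤ (max M 1 - M) * ‖x - x'‖ :=
      mul_nonneg (by linarith [le_max_left M 1]) hx0
    rw [hTdef]; nlinarith [e1, e2, e3]
  -- numerator difference bound
  have hgd : ∀ u : U, |Real.exp ((1 / ε) * ∫ y, J x u y ∂μ)
        - Real.exp ((1 / ε) * ∫ y, J' x' u y ∂μ')|
      ≤ Real.exp (M / ε) * ((1 / ε) * (max M 1 * T)) := by
    intro u
    refine le_trans (mfAux_exp_lip (b := M / ε)
      (abs_le.1 (mfAux_s_bound hε J hJb μ x u)).2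
      (abs_le.1 (mfAux_s_bound hε J' hJ'b μ' x' u)).2) ?_
    apply mul_le_mul_of_nonneg_left ?_ ha.le
    rw [← mul_sub, abs_mul, abs_of_pos (by positivity : (0:ℝ) < 1 / ε)]
    exact mul_le_mul_of_nonneg_left (le_trans (hkey u) hB) (by positivity)
  have hZd : |(∫ v, Real.exp ((1 / ε) * ∫ y, J x v y ∂μ) ∂η)
        - ∫ v, Real.exp ((1 / ε) * ∫ y, J' x' v y ∂μ') ∂η|
      ≤ Real.exp (M / ε) * ((1 / ε) * (max M 1 * T)) :=
    mfAux_abs_integral_sub_le η (mfAux_int_exp η hε hM J hJb hJL μ x)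
      (mfAux_int_exp η hε hM J' hJ'b hJ'L μ' x') hgd
  -- Gibbs strategy difference bound
  have hσd : ∀ u : U, |mfGibbs η ε J μ x u - mfGibbs η ε J' μ' x' u|
      ≤ 2 * Real.exp (M / ε) ^ 3 * (Real.exp (M / ε) * ((1 / ε) * (max M 1 * T))) := by
    intro u
    rw [mfAux_gibbs_eq, mfAux_gibbs_eq]
    have h6 := hgd u
    have h7 := hZd
    set p := Real.exp ((1 / ε) * ∫ y, J x u y ∂μ) with hp
    set q := Real.exp ((1 / ε) * ∫ y, J' x' u y ∂μ') with hq
    set Z := ∫ v, Real.exp ((1 / ε) * ∫ y, J x v y ∂μ) ∂η with hZ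
    set Z' := ∫ v, Real.exp ((1 / ε) * ∫ y, J' x' v y ∂μ') ∂η with hZ'
    have hZpos : 0 < Z := mfAux_Z_pos η hε hM J hJb hJL μ x
    have hZ'pos : 0 < Z' := mfAux_Z_pos η hε hM J' hJ'b hJ'L μ' x'
    have hZlow : (Real.exp (M / ε))⁻¹ ≤ Z := (mfAux_Z_bounds η hε hM J hJb hJL μ x).1
    have hZ'low : (Real.exp (M / ε))⁻¹ ≤ Z' := (mfAux_Z_bounds η hε hM J' hJ'b hJ'L μ' x').1
    have hZ'up : Z' ≤ Real.exp (M / ε) := (mfAux_Z_bounds η hε hM J' hJ'b hJ'L μ' x').2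
    have hqpos : 0 < q := by rw [hq]; exact Real.exp_pos _
    have hqup : q ≤ Real.exp (M / ε) := (mfAux_exp_bounds hε J' hJ'b μ' x' u).2
    have h1 : p / Z - q / Z' = (p * Z' - q * Z) / (Z * Z') := by
      field_simp
    rw [h1, abs_div, abs_of_pos (mul_pos hZpos hZ'pos)]
    have hnum : |p * Z' - q * Z|
        ≤ Real.exp (M / ε) * |p - q| + Real.exp (M / ε) * |Z - Z'| := by
      have h2 : p * Z' - q * Z = Z' * (p - q) + q * (Z' - Z) := by ring
      rw [h2]
      calc |Z' * (p - q) + q * (Z' - Z)| ≤ |Z' * (p - q)| + |q * (Z' - Z)| := abs_add_le _ _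
        _ = Z' * |p - q| + q * |Z' - Z| := by
            rw [abs_mul, abs_mul, abs_of_pos hZ'pos, abs_of_pos hqpos]
        _ ≤ Real.exp (M / ε) * |p - q| + Real.exp (M / ε) * |Z - Z'| := by
            rw [abs_sub_comm Z' Z]
            exact add_le_add (mul_le_mul_of_nonneg_right hZ'up (abs_nonneg _))
              (mul_le_mul_of_nonneg_right hqup (abs_nonneg _))
    calc |p * Z' - q * Z| / (Z * Z')
        ≤ (Real.exp (M / ε) * |p - q| + Real.exp (M / ε) * |Z - Z'|)
            / ((Real.exp (M / ε))⁻¹ * (Real.exp (M / ε))⁻¹) := by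
          apply div_le_div₀ (by positivity) hnum (by positivity)
          exact mul_le_mul hZlow hZ'low (by positivity) hZpos.le
      _ = Real.exp (M / ε) ^ 2 * (Real.exp (M / ε) * |p - q| + Real.exp (M / ε) * |Z - Z'|) := by
          field_simp
      _ ≤ Real.exp (M / ε) ^ 2 * (Real.exp (M / ε)
            * (Real.exp (M / ε) * ((1 / ε) * (max M 1 * T)))
          + Real.exp (M / ε) * (Real.exp (M / ε) * ((1 / ε) * (max M 1 * T)))) := by
          exact mul_le_mul_of_nonneg_left (add_le_add
            (mul_le_mul_of_nonneg_left h6 ha.le)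
            (mul_le_mul_of_nonneg_left h7 ha.le)) (by positivity)
      _ = 2 * Real.exp (M / ε) ^ 3 * (Real.exp (M / ε) * ((1 / ε) * (max M 1 * T))) := by
          ring
  -- Integrability of the velocity integrands
  have hFint : Integrable (fun u => mfGibbs η ε J μ x u • e x u) η := by
    apply Integrable.mono' (g := fun _ => Real.exp (M / ε) ^ 2 * Me) (integrable_const _)
    · exact ((mfAux_gibbs_cont η hM J hJb hJL μ x).measurable.smul (hem x)).aestronglyMeasurable
    · refine ae_of_all _ fun u => ?_
      rw [norm_smul, Real.norm_eq_abs, abs_of_pos (mfAux_gibbs_pos η hε hM J hJb hJL μ x u)]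
      exact mul_le_mul (mfAux_gibbs_le η hε hM J hJb hJL μ x u) (heb x u)
        (norm_nonneg _) (by positivity)
  have hF'int : Integrable (fun u => mfGibbs η ε J' μ' x' u • e x' u) η := by
    apply Integrable.mono' (g := fun _ => Real.exp (M / ε) ^ 2 * Me) (integrable_const _)
    · exact ((mfAux_gibbs_cont η hM J' hJ'b hJ'L μ' x').measurable.smul (hem x')).aestronglyMeasurable
    · refine ae_of_all _ fun u => ?_
      rw [norm_smul, Real.norm_eq_abs, abs_of_pos (mfAux_gibbs_pos η hε hM J' hJ'b hJ'L μ' x' u)]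
      exact mul_le_mul (mfAux_gibbs_le η hε hM J' hJ'b hJ'L μ' x' u) (heb x' u)
        (norm_nonneg _) (by positivity)
  have hvel : mfVelocity η ε J e μ x - mfVelocity η ε J' e μ' x'
      = ∫ u, (mfGibbs η ε J μ x u • e x u - mfGibbs η ε J' μ' x' u • e x' u) ∂η := by
    rw [show mfVelocity η ε J e μ x = ∫ u, mfGibbs η ε J μ x u • e x u ∂η from rfl,
      show mfVelocity η ε J' e μ' x' = ∫ u, mfGibbs η ε J' μ' x' u • e x' u ∂η from rfl,
      ← integral_sub hFint hF'int]
  -- pointwise bound on the integrand difference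
  have hpt : ∀ u : U, ‖mfGibbs η ε J μ x u • e x u - mfGibbs η ε J' μ' x' u • e x' u‖
      ≤ (2 * |Me| * Real.exp (M / ε) ^ 4 * max M 1 / ε
          + Real.exp (M / ε) ^ 2 * |Ke| + 1) * T := by
    intro u
    have heL' : ‖e x u - e x' u‖ ≤ Ke * ‖x - x'‖ := by
      have := heL x x' u u
      rwa [dist_self, add_zero] at this
    have h1 : mfGibbs η ε J μ x u • e x u - mfGibbs η ε J' μ' x' u • e x' u
        = (mfGibbs η ε J μ x u - mfGibbs η ε J' μ' x' u) • e x u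
          + mfGibbs η ε J' μ' x' u • (e x u - e x' u) := by
      rw [sub_smul, smul_sub]; abel
    rw [h1]
    have hσ'abs : |mfGibbs η ε J' μ' x' u| ≤ Real.exp (M / ε) ^ 2 := by
      rw [abs_of_pos (mfAux_gibbs_pos η hε hM J' hJ'b hJ'L μ' x' u)]
      exact mfAux_gibbs_le η hε hM J' hJ'b hJ'L μ' x' u
    have c0 : |mfGibbs η ε J μ x u - mfGibbs η ε J' μ' x' u| * ‖e x u‖
        ≤ 2 * |Me| * Real.exp (M / ε) ^ 4 * max M 1 / ε * T := by
      calc |mfGibbs η ε J μ x u - mfGibbs η ε J' μ' x' u| * ‖e x u‖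
          ≤ (2 * Real.exp (M / ε) ^ 3 * (Real.exp (M / ε) * ((1 / ε) * (max M 1 * T)))) * Me :=
            mul_le_mul (hσd u) (heb x u) (norm_nonneg _) (by positivity)
        _ = (2 * Real.exp (M / ε) ^ 4 * max M 1 * T / ε) * Me := by ring
        _ ≤ (2 * Real.exp (M / ε) ^ 4 * max M 1 * T / ε) * |Me| := by
            apply mul_le_mul_of_nonneg_left (le_abs_self Me)
            exact div_nonneg (mul_nonneg (mul_nonneg (by positivity) hK1) hT0) hε.le
        _ = 2 * |Me| * Real.exp (M / ε) ^ 4 * max M 1 / ε * T := by ring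
    have c1 : |mfGibbs η ε J' μ' x' u| * ‖e x u - e x' u‖
        ≤ Real.exp (M / ε) ^ 2 * |Ke| * T := by
      calc |mfGibbs η ε J' μ' x' u| * ‖e x u - e x' u‖
          ≤ Real.exp (M / ε) ^ 2 * (Ke * ‖x - x'‖) :=
            mul_le_mul hσ'abs heL' (norm_nonneg _) (by positivity)
        _ ≤ Real.exp (M / ε) ^ 2 * (|Ke| * T) := by
            apply mul_le_mul_of_nonneg_left ?_ (by positivity)
            calc Ke * ‖x - x'‖ ≤ |Ke| * ‖x - x'‖ :=
                  mul_le_mul_of_nonneg_right (le_abs_self Ke) hx0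
              _ ≤ |Ke| * T := mul_le_mul_of_nonneg_left hxT (abs_nonneg Ke)
        _ = Real.exp (M / ε) ^ 2 * |Ke| * T := by ring
    calc ‖(mfGibbs η ε J μ x u - mfGibbs η ε J' μ' x' u) • e x u
          + mfGibbs η ε J' μ' x' u • (e x u - e x' u)‖
        ≤ ‖(mfGibbs η ε J μ x u - mfGibbs η ε J' μ' x' u) • e x u‖
          + ‖mfGibbs η ε J' μ' x' u • (e x u - e x' u)‖ := norm_add_le _ _
      _ = |mfGibbs η ε J μ x u - mfGibbs η ε J' μ' x' u| * ‖e x u‖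
          + |mfGibbs η ε J' μ' x' u| * ‖e x u - e x' u‖ := by
          rw [norm_smul, norm_smul, Real.norm_eq_abs, Real.norm_eq_abs]
      _ ≤ 2 * |Me| * Real.exp (M / ε) ^ 4 * max M 1 / ε * T
          + Real.exp (M / ε) ^ 2 * |Ke| * T := add_le_add c0 c1
      _ ≤ (2 * |Me| * Real.exp (M / ε) ^ 4 * max M 1 / ε
          + Real.exp (M / ε) ^ 2 * |Ke| + 1) * T := by nlinarith [hT0]
  rw [hvel]
  refine le_trans (norm_integral_le_of_norm_le_const (ae_of_all _ hpt)) ?_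
  simp [measure_univ]
end

section
/- (Lipschitz continuity of the N-agent fast-reaction velocity map.) Fix N ≥ 1, ε > 0, a compact metric space U with probability measure η, bounded Lipschitz J : ℝ^d × U × ℝ^d → ℝ and e : ℝ^d × U → ℝ^d. For x = (x₁,…,x_N) ∈ [ℝ^d]^N define σᵢ^J(x)(u) = exp((1/(εN))Σⱼ J(xᵢ,u,xⱼ)) / ∫_U exp((1/(εN))Σⱼ J(xᵢ,v,xⱼ)) dη(v) and vᵢ^J(x) = ∫_U e(xᵢ,u)σᵢ^J(x)(u) dη(u). Then the map v^J : [ℝ^d]^N → [ℝ^d]^N, x ↦ (v₁^J(x),…,v_N^J(x)), is Lipschitz with respect to the norm ‖x‖_N = (1/N)Σᵢ‖xᵢ‖, with Lipschitz constant L = L(J, e, ε) independent of N. -/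
open MeasureTheory Real


lemma abs_exp_sub_exp_le {c s t : ℝ} (hs : |s| ≤ c) (ht : |t| ≤ c) :
    |Real.exp s - Real.exp t| ≤ Real.exp c * |s - t| := by
  have key : ∀ p q : ℝ, q ≤ p → |p| ≤ c →
      Real.exp p - Real.exp q ≤ Real.exp c * (p - q) := by
    intro p q hpq hp
    have h1 := Real.add_one_le_exp (q - p)
    have h3 : Real.exp (q - p) * Real.exp p = Real.exp q := by
      rw [← Real.exp_add]; ring_nf
    have h2 : Real.exp p ≤ Real.exp c :=
      Real.exp_le_exp.2 (le_trans (le_abs_self p) hp)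
    nlinarith [Real.exp_pos p, Real.exp_pos q, sub_nonneg.mpr hpq]
  rcases le_total t s with h | h
  · rw [abs_of_nonneg (sub_nonneg.2 (Real.exp_le_exp.2 h)), abs_of_nonneg (sub_nonneg.2 h)]
    exact key s t h hs
  · rw [abs_sub_comm, abs_sub_comm s t,
      abs_of_nonneg (sub_nonneg.2 (Real.exp_le_exp.2 h)), abs_of_nonneg (sub_nonneg.2 h)]
    exact key t s h ht


lemma gibbs_diff_bound {U : Type*} [MeasurableSpace U] (η : Measure U) [IsProbabilityMeasure η]
    {E : Type*} [NormedAddCommGroup E] [NormedSpace ℝ E]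
    (a a' : U → ℝ) (f f' : U → E) (c δ K ρ : ℝ)
    (hδ : 0 ≤ δ) (hK : 0 ≤ K) (hρ : 0 ≤ ρ)
    (ha : Measurable a) (ha' : Measurable a')
    (hf : AEStronglyMeasurable f η) (hf' : AEStronglyMeasurable f' η)
    (hac : ∀ u, |a u| ≤ c) (ha'c : ∀ u, |a' u| ≤ c)
    (hd : ∀ u, |a u - a' u| ≤ δ)
    (hfK : ∀ u, ‖f u‖ ≤ K) (hf'K : ∀ u, ‖f' u‖ ≤ K)
    (hff' : ∀ u, ‖f u - f' u‖ ≤ ρ) :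
    ‖(∫ u, (Real.exp (a u) / ∫ v, Real.exp (a v) ∂η) • f u ∂η)
      - ∫ u, (Real.exp (a' u) / ∫ v, Real.exp (a' v) ∂η) • f' u ∂η‖
      ≤ Real.exp (2*c) * ρ + (Real.exp (2*c) + Real.exp (4*c)) * δ * K := by
  set Z := ∫ v, Real.exp (a v) ∂η with hZ
  set Z' := ∫ v, Real.exp (a' v) ∂η with hZ'
  have hexpint : ∀ (b : U → ℝ), Measurable b → (∀ u, |b u| ≤ c) →
      Integrable (fun u => Real.exp (b u)) η := by
    intro b hb hbc
    refine Integrable.mono' (integrable_const (Real.exp c))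
      (Real.measurable_exp.comp hb).aestronglyMeasurable (ae_of_all _ fun u => ?_)
    rw [Real.norm_eq_abs, abs_of_pos (Real.exp_pos _)]
    exact Real.exp_le_exp.2 (le_trans (le_abs_self _) (hbc u))
  have hintA := hexpint a ha hac
  have hintA' := hexpint a' ha' ha'c
  have hZlow : ∀ (b : U → ℝ), Measurable b → (∀ u, |b u| ≤ c) →
      Real.exp (-c) ≤ ∫ v, Real.exp (b v) ∂η := by
    intro b hb hbc
    have : (∫ _ : U, Real.exp (-c) ∂η) ≤ ∫ v, Real.exp (b v) ∂η := by
      refine integral_mono (integrable_const _) (hexpint b hb hbc) fun u => ?_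
      exact Real.exp_le_exp.2 (neg_le_of_abs_le (hbc u))
    simpa [measure_univ] using this
  have hZl := hZlow a ha hac
  have hZ'l := hZlow a' ha' ha'c
  have hZpos : 0 < Z := lt_of_lt_of_le (Real.exp_pos _) hZl
  have hZ'pos : 0 < Z' := lt_of_lt_of_le (Real.exp_pos _) hZ'l
  have hZZ' : |Z - Z'| ≤ Real.exp c * δ := by
    have heq : Z - Z' = ∫ u, (Real.exp (a u) - Real.exp (a' u)) ∂η :=
      (integral_sub hintA hintA').symm
    rw [← Real.norm_eq_abs, heq]
    have := norm_integral_le_of_norm_le_const (μ := η)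
      (f := fun u => Real.exp (a u) - Real.exp (a' u)) (C := Real.exp c * δ)
      (ae_of_all _ fun u => by
        rw [Real.norm_eq_abs]
        exact le_trans (abs_exp_sub_exp_le (hac u) (ha'c u))
          (mul_le_mul_of_nonneg_left (hd u) (Real.exp_pos c).le))
    simpa [measure_univ] using this
  -- strategy bounds
  set σ : U → ℝ := fun u => Real.exp (a u) / Z with hσ
  set σ' : U → ℝ := fun u => Real.exp (a' u) / Z' with hσ'
  have hexp2 : Real.exp c / Real.exp (-c) = Real.exp (2*c) := by
    rw [← Real.exp_sub, sub_neg_eq_add, two_mul]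
  have hσnn : ∀ u, 0 ≤ σ u := fun u => div_nonneg (Real.exp_pos _).le hZpos.le
  have hσ'nn : ∀ u, 0 ≤ σ' u := fun u => div_nonneg (Real.exp_pos _).le hZ'pos.le
  have hσle : ∀ u, σ u ≤ Real.exp (2*c) := by
    intro u
    rw [← hexp2]
    exact div_le_div₀ (Real.exp_pos c).le
      (Real.exp_le_exp.2 (le_trans (le_abs_self _) (hac u))) (Real.exp_pos _) hZl
  have hσ'le : ∀ u, σ' u ≤ Real.exp (2*c) := by
    intro u
    rw [← hexp2]
    exact div_le_div₀ (Real.exp_pos c).le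
      (Real.exp_le_exp.2 (le_trans (le_abs_self _) (ha'c u))) (Real.exp_pos _) hZ'l
  have hσd : ∀ u, |σ u - σ' u| ≤ (Real.exp (2*c) + Real.exp (4*c)) * δ := by
    intro u
    have hsplit : σ u - σ' u = (Real.exp (a u) - Real.exp (a' u)) / Z
        + Real.exp (a' u) * (Z' - Z) / (Z * Z') := by
      simp only [hσ, hσ']
      field_simp
      ring
    have hnum : |Real.exp (a u) - Real.exp (a' u)| ≤ Real.exp c * δ :=
      le_trans (abs_exp_sub_exp_le (hac u) (ha'c u))
        (mul_le_mul_of_nonneg_left (hd u) (Real.exp_pos c).le)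
    have t1 : |(Real.exp (a u) - Real.exp (a' u)) / Z| ≤ Real.exp (2*c) * δ := by
      rw [abs_div, abs_of_pos hZpos]
      calc |Real.exp (a u) - Real.exp (a' u)| / Z
          ≤ (Real.exp c * δ) / Real.exp (-c) :=
            div_le_div₀ (by positivity) hnum (Real.exp_pos _) hZl
        _ = Real.exp (2*c) * δ := by
            rw [Real.exp_neg, two_mul, Real.exp_add]; field_simp
    have t2 : |Real.exp (a' u) * (Z' - Z) / (Z * Z')| ≤ Real.exp (4*c) * δ := by
      rw [abs_div, abs_mul, abs_of_pos (Real.exp_pos _), abs_of_pos (mul_pos hZpos hZ'pos)]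
      calc Real.exp (a' u) * |Z' - Z| / (Z * Z')
          ≤ (Real.exp c * (Real.exp c * δ)) / (Real.exp (-c) * Real.exp (-c)) := by
            refine div_le_div₀ (by positivity) ?_ (by positivity)
              (mul_le_mul hZl hZ'l (Real.exp_pos _).le hZpos.le)
            exact mul_le_mul (Real.exp_le_exp.2 (le_trans (le_abs_self _) (ha'c u)))
              (by rw [abs_sub_comm]; exact hZZ') (abs_nonneg _) (Real.exp_pos _).le
        _ = Real.exp (4*c) * δ := by
            rw [Real.exp_neg, show (4:ℝ)*c = c + c + (c + c) by ring]
            simp only [Real.exp_add]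
            field_simp
    calc |σ u - σ' u| = |(Real.exp (a u) - Real.exp (a' u)) / Z
        + Real.exp (a' u) * (Z' - Z) / (Z * Z')| := by rw [hsplit]
      _ ≤ _ := abs_add_le _ _
      _ ≤ Real.exp (2*c) * δ + Real.exp (4*c) * δ := add_le_add t1 t2
      _ = (Real.exp (2*c) + Real.exp (4*c)) * δ := by ring
  -- integrability of the velocity integrands
  have hσm : AEStronglyMeasurable σ η :=
    ((Real.measurable_exp.comp ha).div_const Z).aestronglyMeasurable
  have hσ'm : AEStronglyMeasurable σ' η :=
    ((Real.measurable_exp.comp ha').div_const Z').aestronglyMeasurable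
  have hint1 : Integrable (fun u => σ u • f u) η := by
    refine Integrable.mono' (integrable_const (Real.exp (2*c) * K))
      (hσm.smul hf) (ae_of_all _ fun u => ?_)
    rw [norm_smul, Real.norm_eq_abs, abs_of_nonneg (hσnn u)]
    exact mul_le_mul (hσle u) (hfK u) (norm_nonneg _) (Real.exp_pos _).le
  have hint2 : Integrable (fun u => σ' u • f' u) η := by
    refine Integrable.mono' (integrable_const (Real.exp (2*c) * K))
      (hσ'm.smul hf') (ae_of_all _ fun u => ?_)
    rw [norm_smul, Real.norm_eq_abs, abs_of_nonneg (hσ'nn u)]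
    exact mul_le_mul (hσ'le u) (hf'K u) (norm_nonneg _) (Real.exp_pos _).le
  have hmain : ‖∫ u, (σ u • f u - σ' u • f' u) ∂η‖
      ≤ Real.exp (2*c) * ρ + (Real.exp (2*c) + Real.exp (4*c)) * δ * K := by
    have := norm_integral_le_of_norm_le_const (μ := η)
      (f := fun u => σ u • f u - σ' u • f' u)
      (C := Real.exp (2*c) * ρ + (Real.exp (2*c) + Real.exp (4*c)) * δ * K)
      (ae_of_all _ fun u => ?_)
    · simpa [measure_univ] using this
    · show ‖σ u • f u - σ' u • f' u‖ ≤ _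
      have hdecomp : σ u • f u - σ' u • f' u
          = σ u • (f u - f' u) + (σ u - σ' u) • f' u := by
        rw [smul_sub, sub_smul]; abel
      rw [hdecomp]
      refine le_trans (norm_add_le _ _) (add_le_add ?_ ?_)
      · rw [norm_smul, Real.norm_eq_abs, abs_of_nonneg (hσnn u)]
        exact mul_le_mul (hσle u) (hff' u) (norm_nonneg _) (Real.exp_pos _).le
      · rw [norm_smul, Real.norm_eq_abs]
        exact mul_le_mul (hσd u) (hf'K u) (norm_nonneg _) (by positivity)
  show ‖(∫ u, σ u • f u ∂η) - ∫ u, σ' u • f' u ∂η‖ ≤ _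
  rw [← integral_sub hint1 hint2]
  exact hmain

/-- Gibbs strategy of agent `i` in the `N`-agent fast-reaction system. -/
noncomputable def frStrategy {U : Type*} [MeasurableSpace U] {d N : ℕ}
    (η : Measure U) (ε : ℝ)
    (J : EuclideanSpace ℝ (Fin d) → U → EuclideanSpace ℝ (Fin d) → ℝ)
    (x : Fin N → EuclideanSpace ℝ (Fin d)) (i : Fin N) (u : U) : ℝ :=
  Real.exp ((1 / (ε * N)) * ∑ j, J (x i) u (x j))
    / ∫ v, Real.exp ((1 / (ε * N)) * ∑ j, J (x i) v (x j)) ∂η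

noncomputable def frVelocity {U : Type*} [MeasurableSpace U] {d N : ℕ}
    (η : Measure U) (ε : ℝ)
    (J : EuclideanSpace ℝ (Fin d) → U → EuclideanSpace ℝ (Fin d) → ℝ)
    (e : EuclideanSpace ℝ (Fin d) → U → EuclideanSpace ℝ (Fin d))
    (x : Fin N → EuclideanSpace ℝ (Fin d)) (i : Fin N) : EuclideanSpace ℝ (Fin d) :=
  ∫ u, frStrategy η ε J x i u • e (x i) u ∂η

/-- The `N`-agent fast-reaction velocity map is Lipschitz for the mean norm `‖·‖_N`,
with a Lipschitz constant depending only on `J`, `e`, `ε` (not on `N`). -/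
theorem frVelocity_lipschitz
    {U : Type*} [MetricSpace U] [CompactSpace U] [MeasurableSpace U] [BorelSpace U]
    {d : ℕ} (η : Measure U) [IsProbabilityMeasure η]
    (ε M Me : ℝ) (hε : 0 < ε) (hM : 0 < M)
    (J : EuclideanSpace ℝ (Fin d) → U → EuclideanSpace ℝ (Fin d) → ℝ)
    (hJb : ∀ y u y', |J y u y'| ≤ M)
    (hJL : ∀ y₁ y₂ u₁ u₂ y₁' y₂', |J y₁ u₁ y₁' - J y₂ u₂ y₂'|
      ≤ M * (‖y₁ - y₂‖ + dist u₁ u₂ + ‖y₁' - y₂'‖))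
    (e : EuclideanSpace ℝ (Fin d) → U → EuclideanSpace ℝ (Fin d))
    (heb : ∀ x u, ‖e x u‖ ≤ Me)
    (heL : ∀ x₁ x₂ u₁ u₂, ‖e x₁ u₁ - e x₂ u₂‖ ≤ Me * (‖x₁ - x₂‖ + dist u₁ u₂))
    (hem : ∀ x, Measurable (e x)) :
    ∃ L : ℝ, 0 < L ∧
      ∀ (N : ℕ), 0 < N →
      ∀ x x' : Fin N → EuclideanSpace ℝ (Fin d),
        (1 / (N : ℝ)) * ∑ i, ‖frVelocity η ε J e x i - frVelocity η ε J e x' i‖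
          ≤ L * ((1 / (N : ℝ)) * ∑ i, ‖x i - x' i‖) := by
  have hU : Nonempty U := by
    by_contra h
    rw [not_nonempty_iff] at h
    have h1 : (η Set.univ) = 1 := measure_univ
    rw [Set.univ_eq_empty_iff.2 h, measure_empty] at h1
    exact zero_ne_one h1
  obtain ⟨u₀⟩ := hU
  have hMe : 0 ≤ Me := le_trans (norm_nonneg _) (heb 0 u₀)
  set c : ℝ := M / ε with hc
  have hcpos : 0 < c := div_pos hM hε
  set L₀ : ℝ := Real.exp (2*c) * Me + (Real.exp (2*c) + Real.exp (4*c)) * c * Me with hL₀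
  have hL₀nn : 0 ≤ L₀ := by positivity
  refine ⟨2 * L₀ + 1, by positivity, fun N hN x x' => ?_⟩
  have hN' : (0:ℝ) < N := by exact_mod_cast hN
  set S : ℝ := ∑ j, ‖x j - x' j‖ with hS
  have hSnn : 0 ≤ S := Finset.sum_nonneg fun j _ => norm_nonneg _
  -- continuity of u ↦ J y u y'
  have hJc : ∀ y y', Continuous (fun u => J y u y') := by
    intro y y'
    refine (LipschitzWith.of_dist_le_mul (K := M.toNNReal) fun u v => ?_).continuous
    rw [Real.dist_eq, Real.coe_toNNReal M hM.le]
    have := hJL y y u v y' y'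
    simpa using this
  -- per-agent bound
  have key : ∀ i : Fin N, ‖frVelocity η ε J e x i - frVelocity η ε J e x' i‖
      ≤ L₀ * (‖x i - x' i‖ + (1/(N:ℝ)) * S) := by
    intro i
    set D : ℝ := ‖x i - x' i‖ + (1/(N:ℝ)) * S with hD
    have hDnn : 0 ≤ D := by positivity
    set a : U → ℝ := fun u => (1 / (ε * N)) * ∑ j, J (x i) u (x j) with ha
    set a' : U → ℝ := fun u => (1 / (ε * N)) * ∑ j, J (x' i) u (x' j) with ha'
    have hεN : (0:ℝ) < ε * N := by positivity
    have hmeas : ∀ (y : EuclideanSpace ℝ (Fin d)) (z : Fin N → EuclideanSpace ℝ (Fin d)),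
        Measurable (fun u : U => (1 / (ε * N)) * ∑ j, J y u (z j)) := by
      intro y z
      exact (continuous_const.mul (continuous_finset_sum _ fun j _ => hJc y (z j))).measurable
    have habs : ∀ (y : EuclideanSpace ℝ (Fin d)) (z : Fin N → EuclideanSpace ℝ (Fin d)) (u : U),
        |(1 / (ε * N)) * ∑ j, J y u (z j)| ≤ c := by
      intro y z u
      rw [abs_mul, abs_of_pos (by positivity : (0:ℝ) < 1 / (ε * N))]
      have h1 : |∑ j, J y u (z j)| ≤ (N:ℝ) * M := by
        refine le_trans (Finset.abs_sum_le_sum_abs _ _) ?_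
        calc ∑ j : Fin N, |J y u (z j)| ≤ ∑ _j : Fin N, M :=
              Finset.sum_le_sum fun j _ => hJb y u (z j)
          _ = (N:ℝ) * M := by simp [Finset.sum_const, mul_comm]
      calc (1 / (ε * N)) * |∑ j, J y u (z j)| ≤ (1 / (ε * N)) * ((N:ℝ) * M) :=
            mul_le_mul_of_nonneg_left h1 (by positivity)
        _ = c := by rw [hc]; field_simp
    have hdiff : ∀ u, |a u - a' u| ≤ c * D := by
      intro u
      have h0 : a u - a' u = (1 / (ε * N)) * ∑ j, (J (x i) u (x j) - J (x' i) u (x' j)) := by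
        rw [ha, ha']
        rw [Finset.sum_sub_distrib, mul_sub]
      rw [h0, abs_mul, abs_of_pos (by positivity : (0:ℝ) < 1 / (ε * N))]
      have h1 : |∑ j, (J (x i) u (x j) - J (x' i) u (x' j))|
          ≤ ∑ j, M * (‖x i - x' i‖ + ‖x j - x' j‖) := by
        refine le_trans (Finset.abs_sum_le_sum_abs _ _) (Finset.sum_le_sum fun j _ => ?_)
        have := hJL (x i) (x' i) u u (x j) (x' j)
        simpa using this
      have h2 : ∑ j, M * (‖x i - x' i‖ + ‖x j - x' j‖)
          = (N:ℝ) * (M * ‖x i - x' i‖) + M * S := by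
        simp [mul_add, Finset.sum_add_distrib, Finset.mul_sum, hS, mul_comm]
      calc (1 / (ε * N)) * |∑ j, (J (x i) u (x j) - J (x' i) u (x' j))|
          ≤ (1 / (ε * N)) * ((N:ℝ) * (M * ‖x i - x' i‖) + M * S) := by
            refine mul_le_mul_of_nonneg_left (le_trans h1 (le_of_eq h2)) (by positivity)
        _ = c * D := by rw [hc, hD]; field_simp
    have hb := gibbs_diff_bound η a a' (fun u => e (x i) u) (fun u => e (x' i) u)
      c (c * D) Me (Me * ‖x i - x' i‖)
      (by positivity) hMe (by positivity)
      (hmeas _ _) (hmeas _ _)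
      (hem (x i)).aestronglyMeasurable (hem (x' i)).aestronglyMeasurable
      (habs _ _) (habs _ _) hdiff
      (fun u => heb (x i) u) (fun u => heb (x' i) u)
      (fun u => by simpa using heL (x i) (x' i) u u)
    have hveq : frVelocity η ε J e x i - frVelocity η ε J e x' i
        = (∫ u, (Real.exp (a u) / ∫ v, Real.exp (a v) ∂η) • e (x i) u ∂η)
          - ∫ u, (Real.exp (a' u) / ∫ v, Real.exp (a' v) ∂η) • e (x' i) u ∂η := rfl
    rw [hveq]
    refine le_trans hb ?_
    have hxd : ‖x i - x' i‖ ≤ D := by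
      rw [hD]
      have h0 : 0 ≤ 1/(N:ℝ) * S := by positivity
      linarith
    have h1 : Real.exp (2*c) * (Me * ‖x i - x' i‖) ≤ Real.exp (2*c) * Me * D := by
      rw [mul_assoc]
      exact mul_le_mul_of_nonneg_left (mul_le_mul_of_nonneg_left hxd hMe) (Real.exp_pos _).le
    have h2 : (Real.exp (2*c) + Real.exp (4*c)) * (c * D) * Me
        = (Real.exp (2*c) + Real.exp (4*c)) * c * Me * D := by ring
    rw [hL₀]
    linarith [h1, h2.le, h2.ge]
  -- summation
  calc (1 / (N : ℝ)) * ∑ i, ‖frVelocity η ε J e x i - frVelocity η ε J e x' i‖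
      ≤ (1 / (N : ℝ)) * ∑ i, L₀ * (‖x i - x' i‖ + (1/(N:ℝ)) * S) := by
        refine mul_le_mul_of_nonneg_left (Finset.sum_le_sum fun i _ => key i) (by positivity)
    _ = 2 * L₀ * ((1 / (N : ℝ)) * S) := by
        rw [← Finset.mul_sum, Finset.sum_add_distrib, Finset.sum_const, ← hS]
        simp only [Finset.card_univ, Fintype.card_fin, nsmul_eq_mul]
        field_simp
        ring
    _ ≤ (2 * L₀ + 1) * ((1 / (N : ℝ)) * S) := by
        refine mul_le_mul_of_nonneg_right (by linarith) (by positivity)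
end

section
/- (Compatibility/invariance of the entropic replicator direction.) Let U be a measurable space with probability measure η, ε > 0, λ > 0, and J bounded with ‖J‖_∞ < ∞. Choose 0 < a < exp(−2‖J‖_∞/ε) and b > exp(2‖J‖_∞/ε + K_{a,b}) where K_{a,b} = (a(b−1)/(b−a))log a + (b(1−a)/(b−a))log b. Then for every σ ∈ S_{a,b} = {σ : U → [a,b] measurable, ∫σ dη = 1} and every x, x' ∈ ℝ^d, σ' ∈ S_{a,b}, there exists θ > 0 such that σ + θλ(f^J(x,σ,x',σ') + f^ε(σ)) ∈ S_{a,b}. -/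
open MeasureTheory Real

/-- The replicator interaction term `f^J`. -/
noncomputable def fJ {U : Type*} [MeasurableSpace U] {d : ℕ}
    (η : Measure U)
    (J : EuclideanSpace ℝ (Fin d) → U → EuclideanSpace ℝ (Fin d) → U → ℝ)
    (x : EuclideanSpace ℝ (Fin d)) (σ : U → ℝ)
    (x' : EuclideanSpace ℝ (Fin d)) (σ' : U → ℝ) (u : U) : ℝ :=
  ((∫ u', J x u x' u' * σ' u' ∂η)
    - ∫ v, (∫ u', J x v x' u' * σ' u' ∂η) * σ v ∂η) * σ u

/-- The entropic term `f^ε`. -/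
noncomputable def fEps {U : Type*} [MeasurableSpace U]
    (η : Measure U) (ε : ℝ) (σ : U → ℝ) (u : U) : ℝ :=
  ε * (-(Real.log (σ u)) + ∫ v, Real.log (σ v) * σ v ∂η) * σ u

set_option maxHeartbeats 1000000 in
/-- Compatibility: moving from `σ ∈ S_{a,b}` in the direction `f^J + f^ε` stays in
`S_{a,b}` for a small positive time, for the stated choice of the bounds `a, b`. -/
theorem entropic_compatibility
    {U : Type*} [MetricSpace U] [CompactSpace U] [MeasurableSpace U] [BorelSpace U]
    {d : ℕ} (η : Measure U) [IsProbabilityMeasure η]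
    (ε lam M a b : ℝ) (hε : 0 < ε) (hlam : 0 < lam) (hM : 0 ≤ M)
    (J : EuclideanSpace ℝ (Fin d) → U → EuclideanSpace ℝ (Fin d) → U → ℝ)
    (hJb : ∀ x u x' u', |J x u x' u'| ≤ M)
    (hJm : ∀ x x', Measurable (fun p : U × U => J x p.1 x' p.2))
    (ha0 : 0 < a)
    (ha : a < Real.exp (-(2 * M) / ε))
    (hb : b > Real.exp (2 * M / ε +
      ((a * (b - 1) / (b - a)) * Real.log a + (b * (1 - a) / (b - a)) * Real.log b))) :
    ∀ (σ σ' : U → ℝ), Measurable σ → Measurable σ' →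
      (∀ u, σ u ∈ Set.Icc a b) → (∀ u, σ' u ∈ Set.Icc a b) →
      (∫ u, σ u ∂η) = 1 → (∫ u, σ' u ∂η) = 1 →
    ∀ x x' : EuclideanSpace ℝ (Fin d),
      ∃ θ : ℝ, 0 < θ ∧
        (∀ u, σ u + θ * lam * (fJ η J x σ x' σ' u + fEps η ε σ u) ∈ Set.Icc a b) ∧
        (∫ u, (σ u + θ * lam * (fJ η J x σ x' σ' u + fEps η ε σ u)) ∂η) = 1 := by
  intro σ σ' hσm hσ'm hσab hσ'ab hσ1 hσ'1 x x'
  have key : ∀ (f : U → ℝ) (Cf : ℝ), Measurable f → (∀ u, |f u| ≤ Cf) → Integrable f η := by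
    intro f Cf hm hbd
    exact (integrable_const Cf).mono' hm.aestronglyMeasurable
      (Filter.Eventually.of_forall (by simpa [Real.norm_eq_abs] using hbd))
  have hσpos : ∀ u, 0 < σ u := fun u => lt_of_lt_of_le ha0 (hσab u).1
  have hσb : ∀ u, |σ u| ≤ b := fun u => abs_le.mpr ⟨by nlinarith [(hσab u).1, hσpos u, (hσab u).2], (hσab u).2⟩
  have hσ'b : ∀ u, |σ' u| ≤ b := fun u =>
    abs_le.mpr ⟨by nlinarith [(hσ'ab u).1, lt_of_lt_of_le ha0 (hσ'ab u).1, (hσ'ab u).2], (hσ'ab u).2⟩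
  have hσint : Integrable σ η := key σ b hσm hσb
  have hσ'int : Integrable σ' η := key σ' b hσ'm hσ'b
  have h1b : (1:ℝ) ≤ b := by
    calc (1:ℝ) = ∫ u, σ u ∂η := hσ1.symm
    _ ≤ ∫ _u, b ∂η := integral_mono hσint (integrable_const b) (fun u => (hσab u).2)
    _ = b := by simp
  have ha1 : a ≤ 1 := by
    calc a = ∫ _u : U, a ∂η := by simp
    _ ≤ ∫ u, σ u ∂η := integral_mono (integrable_const a) hσint (fun u => (hσab u).1)
    _ = 1 := hσ1
  have hb0 : 0 < b := lt_of_lt_of_le one_pos h1b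
  have he1le1 : Real.exp (-(2*M)/ε) ≤ 1 :=
    Real.exp_le_one_iff.mpr (div_nonpos_of_nonpos_of_nonneg (by linarith) hε.le)
  have hab : a < b := lt_of_lt_of_le (ha.trans_le he1le1) h1b
  -- the interaction kernel averaged against σ'
  set A : U → ℝ := fun u => ∫ u', J x u x' u' * σ' u' ∂η with hA
  have hFm : Measurable (fun p : U × U => J x p.1 x' p.2 * σ' p.2) :=
    (hJm x x').mul (hσ'm.comp measurable_snd)
  have hAm : Measurable A :=
    (hFm.stronglyMeasurable.integral_prod_right').measurable
  have hAint : ∀ u, Integrable (fun u' => J x u x' u' * σ' u') η := by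
    intro u
    refine key _ (M * b) (hFm.comp measurable_prodMk_left) ?_
    intro u'
    rw [abs_mul]
    exact mul_le_mul (hJb x u x' u') (hσ'b u') (abs_nonneg _) hM
  have hAb : ∀ u, |A u| ≤ M := by
    intro u
    rw [hA]
    calc |∫ u', J x u x' u' * σ' u' ∂η| ≤ ∫ u', |J x u x' u'| * |σ' u'| ∂η := by
          simpa [Real.norm_eq_abs, abs_mul] using
            norm_integral_le_integral_norm (μ := η) (fun u' => J x u x' u' * σ' u')
    _ ≤ ∫ u', M * σ' u' ∂η := by
          refine integral_mono (by simpa [abs_mul] using (hAint u).abs)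
            (hσ'int.const_mul M) (fun u' => ?_)
          have hp := lt_of_lt_of_le ha0 (hσ'ab u').1
          rw [abs_of_pos hp]
          exact mul_le_mul_of_nonneg_right (hJb x u x' u') hp.le
    _ = M := by rw [integral_const_mul, hσ'1, mul_one]
  -- B and its bound
  have hAσint : Integrable (fun v => A v * σ v) η :=
    key _ (M * b) (hAm.mul hσm) (fun v => by
      rw [abs_mul]; exact mul_le_mul (hAb v) (hσb v) (abs_nonneg _) hM)
  set B : ℝ := ∫ v, A v * σ v ∂η with hB
  have hBb : |B| ≤ M := by
    rw [hB]
    calc |∫ v, A v * σ v ∂η| ≤ ∫ v, |A v| * |σ v| ∂η := by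
          simpa [Real.norm_eq_abs, abs_mul] using
            norm_integral_le_integral_norm (μ := η) (fun v => A v * σ v)
    _ ≤ ∫ v, M * σ v ∂η := by
          refine integral_mono (by simpa [abs_mul] using hAσint.abs)
            (hσint.const_mul M) (fun v => ?_)
          rw [abs_of_pos (hσpos v)]
          exact mul_le_mul_of_nonneg_right (hAb v) (hσpos v).le
    _ = M := by rw [integral_const_mul, hσ1, mul_one]
  -- the entropy integral c
  set L : ℝ := max |Real.log a| |Real.log b| with hL
  have hL0 : 0 ≤ L := le_trans (abs_nonneg _) (le_max_left _ _)
  have hlogσ : ∀ u, |Real.log (σ u)| ≤ L := by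
    intro u
    rw [abs_le]
    constructor
    · calc -L ≤ -|Real.log a| := by simp [hL]
      _ ≤ Real.log a := neg_abs_le _
      _ ≤ Real.log (σ u) := Real.log_le_log ha0 (hσab u).1
    · calc Real.log (σ u) ≤ Real.log b := Real.log_le_log (hσpos u) (hσab u).2
      _ ≤ |Real.log b| := le_abs_self _
      _ ≤ L := le_max_right _ _
  have hent_int : Integrable (fun v => Real.log (σ v) * σ v) η :=
    key _ (L * b) ((Real.measurable_log.comp hσm).mul hσm) (fun v => by
      rw [abs_mul]
      exact mul_le_mul (hlogσ v) (hσb v) (abs_nonneg _) hL0)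
  set c : ℝ := ∫ v, Real.log (σ v) * σ v ∂η with hc
  have hcb : |c| ≤ L * b := by
    rw [hc]
    calc |∫ v, Real.log (σ v) * σ v ∂η| ≤ ∫ v, |Real.log (σ v)| * |σ v| ∂η := by
          simpa [Real.norm_eq_abs, abs_mul] using
            norm_integral_le_integral_norm (μ := η) (fun v => Real.log (σ v) * σ v)
    _ ≤ ∫ _v, L * b ∂η := integral_mono (by simpa [abs_mul] using hent_int.abs)
          (integrable_const _) (fun v =>
          mul_le_mul (hlogσ v) (hσb v) (abs_nonneg _) hL0)
    _ = L * b := by simp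
  -- Jensen: c ≥ 0
  have hconv : ConvexOn ℝ (Set.Icc a b) (fun t : ℝ => t * Real.log t) :=
    Real.convexOn_mul_log.subset (fun t ht => le_trans ha0.le ht.1) (convex_Icc a b)
  have hc0 : 0 ≤ c := by
    have hJen := hconv.map_average_le (Real.continuous_mul_log.continuousOn)
      isClosed_Icc (Filter.Eventually.of_forall hσab) hσint
      (by simpa [Function.comp_def, mul_comm] using hent_int)
    rw [average_eq_integral, average_eq_integral, hσ1] at hJen
    simpa [hc, mul_comm] using hJen
  -- chord bound: c ≤ K
  set K : ℝ := (a * (b - 1) / (b - a)) * Real.log a + (b * (1 - a) / (b - a)) * Real.log b with hK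
  have hcK : c ≤ K := by
    have hba : 0 < b - a := by linarith
    have hchord : ∀ u, Real.log (σ u) * σ u ≤
        ((a * Real.log a * b - b * Real.log b * a) / (b - a))
        + ((b * Real.log b - a * Real.log a) / (b - a)) * σ u := by
      intro u
      have h1 : (b - σ u) / (b - a) * a + (σ u - a) / (b - a) * b = σ u := by
        field_simp
        ring
      have h2 : σ u * Real.log (σ u) ≤
          (b - σ u) / (b - a) * (a * Real.log a) + (σ u - a) / (b - a) * (b * Real.log b) := by
        have h3 := hconv.2 (Set.left_mem_Icc.mpr hab.le) (Set.right_mem_Icc.mpr hab.le)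
          (show (0:ℝ) ≤ (b - σ u) / (b - a) from
            div_nonneg (by linarith [(hσab u).2]) hba.le)
          (show (0:ℝ) ≤ (σ u - a) / (b - a) from
            div_nonneg (by linarith [(hσab u).1]) hba.le)
          (by rw [← add_div, div_eq_one_iff_eq hba.ne']; ring)
        simp only [smul_eq_mul] at h3
        rw [h1] at h3
        simpa [mul_comm, mul_assoc, mul_left_comm] using h3
      have expand : (b - σ u) / (b - a) * (a * Real.log a)
          + (σ u - a) / (b - a) * (b * Real.log b)
          = ((a * Real.log a * b - b * Real.log b * a) / (b - a))
          + ((b * Real.log b - a * Real.log a) / (b - a)) * σ u := by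
        field_simp
        ring
      rw [mul_comm (Real.log (σ u)) (σ u), ← expand]
      exact h2
    have hint : c ≤ ∫ u, ((a * Real.log a * b - b * Real.log b * a) / (b - a))
        + ((b * Real.log b - a * Real.log a) / (b - a)) * σ u ∂η := by
      rw [hc]
      exact integral_mono hent_int
        ((integrable_const _).add (hσint.const_mul _)) hchord
    rw [integral_add (integrable_const _) (hσint.const_mul _), integral_const,
      integral_const_mul, hσ1] at hint
    simp only [probReal_univ, measure_univ, ENNReal.toReal_one, smul_eq_mul, one_mul, mul_one] at hint
    refine hint.trans (le_of_eq ?_)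
    rw [hK]
    field_simp
    ring
  -- the direction g
  set g : U → ℝ := fun u => fJ η J x σ x' σ' u + fEps η ε σ u with hg
  have hgform : ∀ u, g u = (A u - B + ε * (-(Real.log (σ u)) + c)) * σ u := by
    intro u
    simp only [hg, fJ, fEps, hA, hB, hc]
    ring
  have hgm : Measurable g := by
    have : g = fun u => (A u - B + ε * (-(Real.log (σ u)) + c)) * σ u := funext hgform
    rw [this]
    exact ((hAm.sub measurable_const).add
      (measurable_const.mul ((Real.measurable_log.comp hσm).neg.add measurable_const))).mul hσm
  set C : ℝ := (2 * M + ε * (L + L * b)) * b with hC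
  have hC0 : 0 ≤ C := by positivity
  have hgb : ∀ u, |g u| ≤ C := by
    intro u
    rw [hgform u, hC, abs_mul, abs_of_pos (hσpos u)]
    refine mul_le_mul ?_ (hσab u).2 (hσpos u).le (by positivity)
    calc |A u - B + ε * (-(Real.log (σ u)) + c)|
        ≤ |A u| + |B| + ε * (|Real.log (σ u)| + |c|) := by
          have h1 : |A u - B + ε * (-(Real.log (σ u)) + c)|
              ≤ |A u - B| + |ε * (-(Real.log (σ u)) + c)| := abs_add_le _ _
          have h2 : |A u - B| ≤ |A u| + |B| := abs_sub _ _
          have h3 : |ε * (-(Real.log (σ u)) + c)| ≤ ε * (|Real.log (σ u)| + |c|) := by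
            rw [abs_mul, abs_of_pos hε]
            exact mul_le_mul_of_nonneg_left
              ((abs_add_le _ _).trans (by rw [abs_neg])) hε.le
          linarith
    _ ≤ 2 * M + ε * (L + L * b) := by
          have := hAb u
          have := hBb
          have := hlogσ u
          have := hcb
          nlinarith
  -- integral of g is zero
  have hgint : Integrable g η := key g C hgm hgb
  have hfJint : Integrable (fun u => fJ η J x σ x' σ' u) η := by
    refine key _ ((M + M) * b) ?_ ?_
    · exact ((hAm.sub measurable_const).mul hσm)
    · intro u
      show |(A u - B) * σ u| ≤ (M + M) * b
      rw [abs_mul]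
      exact mul_le_mul ((abs_sub _ _).trans (add_le_add (hAb u) hBb)) (hσb u)
        (abs_nonneg _) (by linarith)
  have hfJ0 : (∫ u, fJ η J x σ x' σ' u ∂η) = 0 := by
    have : (fun u => fJ η J x σ x' σ' u) = fun u => A u * σ u - B * σ u := by
      funext u
      show (A u - B) * σ u = _
      ring
    rw [this, integral_sub hAσint (hσint.const_mul B), integral_const_mul, hσ1, mul_one,
      ← hB, sub_self]
  have hfEps0 : (∫ u, fEps η ε σ u ∂η) = 0 := by
    have : (fun u => fEps η ε σ u) = fun u => ε * (c * σ u) - ε * (Real.log (σ u) * σ u) := by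
      funext u
      show ε * (-(Real.log (σ u)) + c) * σ u = _
      ring
    rw [this, integral_sub ((hσint.const_mul c).const_mul ε) (hent_int.const_mul ε),
      integral_const_mul, integral_const_mul, integral_const_mul, hσ1, ← hc]
    ring
  have hfEpsint : Integrable (fun u => fEps η ε σ u) η := by
    have heq : (fun u => fEps η ε σ u) = fun u => g u - fJ η J x σ x' σ' u := by
      funext u
      rw [hg]
      ring
    rw [heq]
    exact hgint.sub hfJint
  have hg0 : (∫ u, g u ∂η) = 0 := by
    rw [hg, integral_add hfJint hfEpsint, hfJ0, hfEps0, add_zero]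
  -- choice of θ
  set e₁ : ℝ := Real.exp (-(2 * M) / ε) with he₁
  set e₂ : ℝ := Real.exp (2 * M / ε + K) with he₂
  have hδ₁ : 0 < e₁ - a := by linarith
  have hδ₂ : 0 < b - e₂ := by linarith
  set θ : ℝ := min (e₁ - a) (b - e₂) / (lam * (C + 1)) with hθ
  have hθpos : 0 < θ := div_pos (lt_min hδ₁ hδ₂) (by positivity)
  have hθlam : θ * lam = min (e₁ - a) (b - e₂) / (C + 1) := by
    rw [hθ, div_mul_eq_mul_div, mul_comm lam (C + 1), mul_div_mul_right _ _ hlam.ne']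
  have hθlamC : θ * lam * C ≤ min (e₁ - a) (b - e₂) := by
    have hm0 : 0 ≤ min (e₁ - a) (b - e₂) := le_of_lt (lt_min hδ₁ hδ₂)
    rw [hθlam, div_mul_eq_mul_div, div_le_iff₀ (by linarith : (0:ℝ) < C + 1)]
    exact mul_le_mul_of_nonneg_left (by linarith) hm0
  -- sign conditions at the boundary
  have hlow : ∀ u, σ u ≤ e₁ → 0 ≤ g u := by
    intro u hu
    rw [hgform u]
    refine mul_nonneg ?_ (hσpos u).le
    have hlog : Real.log (σ u) ≤ -(2 * M) / ε := by
      calc Real.log (σ u) ≤ Real.log e₁ := Real.log_le_log (hσpos u) hu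
      _ = -(2 * M) / ε := by rw [he₁, Real.log_exp]
    have h1 : ε * Real.log (σ u) ≤ -(2 * M) := by
      have h := mul_le_mul_of_nonneg_left hlog hε.le
      rwa [mul_div_cancel₀ _ hε.ne'] at h
    have h2 : -M ≤ A u := neg_le_of_abs_le (hAb u)
    have h3 : B ≤ M := le_of_abs_le hBb
    nlinarith [mul_le_mul_of_nonneg_left hc0 hε.le]
  have hhigh : ∀ u, e₂ ≤ σ u → g u ≤ 0 := by
    intro u hu
    rw [hgform u]
    refine mul_nonpos_of_nonpos_of_nonneg ?_ (hσpos u).le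
    have hlog : 2 * M / ε + K ≤ Real.log (σ u) := by
      calc 2 * M / ε + K = Real.log e₂ := by rw [he₂, Real.log_exp]
      _ ≤ Real.log (σ u) := Real.log_le_log (Real.exp_pos _) hu
    have h1 : 2 * M + ε * K ≤ ε * Real.log (σ u) := by
      have := mul_le_mul_of_nonneg_left hlog hε.le
      rw [mul_add, mul_div_cancel₀ _ hε.ne'] at this
      linarith
    have h2 : A u ≤ M := le_of_abs_le (hAb u)
    have h3 : -M ≤ B := neg_le_of_abs_le hBb
    nlinarith [mul_le_mul_of_nonneg_left hcK hε.le]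
  refine ⟨θ, hθpos, fun u => ?_, ?_⟩
  · constructor
    · by_cases hcase : σ u ≤ e₁
      · have := mul_nonneg (mul_nonneg hθpos.le hlam.le) (hlow u hcase)
        have := (hσab u).1
        show a ≤ σ u + θ * lam * g u
        nlinarith
      · push_neg at hcase
        have h1 : θ * lam * g u ≥ -(θ * lam * C) := by
          have := neg_le_of_abs_le (hgb u)
          nlinarith [mul_pos hθpos hlam]
        have h2 : θ * lam * C ≤ e₁ - a := hθlamC.trans (min_le_left _ _)
        show a ≤ σ u + θ * lam * g u
        nlinarith
    · by_cases hcase : e₂ ≤ σ u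
      · have := mul_nonpos_of_nonneg_of_nonpos (mul_nonneg hθpos.le hlam.le) (hhigh u hcase)
        have := (hσab u).2
        show σ u + θ * lam * g u ≤ b
        nlinarith
      · push_neg at hcase
        have h1 : θ * lam * g u ≤ θ * lam * C := by
          have := le_of_abs_le (hgb u)
          nlinarith [mul_pos hθpos hlam]
        have h2 : θ * lam * C ≤ b - e₂ := hθlamC.trans (min_le_right _ _)
        show σ u + θ * lam * g u ≤ b
        nlinarith
  · have : (fun u => σ u + θ * lam * (fJ η J x σ x' σ' u + fEps η ε σ u))
        = fun u => σ u + θ * lam * g u := by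
      funext u
      rw [hg]
    rw [this, integral_add hσint ((hgint.const_mul (θ * lam))), integral_const_mul, hg0,
      mul_zero, add_zero, hσ1]
end

section
/- (Strong-convexity gradient-domination inequality for the strategy energy.) Let U carry a probability measure η, let g : U → ℝ be bounded measurable, ε > 0, 0 < a < b, and define G(σ) = ∫_U [−g(u)σ(u) + ε(σ(u)log σ(u) − σ(u) + 1)] dη(u) on S_{a,b}. Let σ* ∈ S_{a,b} be the Gibbs minimizer σ*(u) ∝ exp(g(u)/ε) (assumed to take values in [a,b]), let c > 0 satisfy c ≤ ε/s for s ∈ [a,b], and for σ ∈ S_{a,b} let g'_u(σ(u)) = −g(u) + ε log σ(u) and m(σ) = ∫_U g'_v(σ(v))σ(v) dη(v). Then ‖g'_·(σ(·)) − m(σ)‖²_{L²_η} ≥ (c/2)[G(σ) − G(σ*)]. -/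
open MeasureTheory Real

/-- The strategy energy `G`. -/
noncomputable def stratEnergy {U : Type*} [MeasurableSpace U]
    (η : Measure U) (ε : ℝ) (g : U → ℝ) (σ : U → ℝ) : ℝ :=
  ∫ u, (-(g u) * σ u + ε * (σ u * Real.log (σ u) - σ u + 1)) ∂η


lemma key_ineq {a b : ℝ} (ha : 0 < a) (hab : a < b) {s t : ℝ}
    (hs : s ∈ Set.Icc a b) (ht : t ∈ Set.Icc a b) :
    (s - t)^2 / (2*b) ≤ s * Real.log s - s * Real.log t - s + t := by
  obtain ⟨hs1, hs2⟩ := hs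
  obtain ⟨ht1, ht2⟩ := ht
  have hb : (0:ℝ) < b := ha.trans hab
  have ht0 : (0:ℝ) < t := ha.trans_le ht1
  set F : ℝ → ℝ := fun x => x * Real.log x - x * Real.log t - x + t - (x - t)^2 / (2*b) with hF
  have hder : ∀ x : ℝ, 0 < x → HasDerivAt F (Real.log x - Real.log t - (x - t)/b) x := by
    intro x hx
    have h1 : HasDerivAt (fun x : ℝ => x * Real.log x) (Real.log x + 1) x :=
      Real.hasDerivAt_mul_log hx.ne'
    have h2 : HasDerivAt (fun x : ℝ => x * Real.log t) (Real.log t) x := by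
      simpa using (hasDerivAt_id x).mul_const (Real.log t)
    have h3 : HasDerivAt (fun x : ℝ => (x - t)^2 / (2*b)) (2*(x-t)/(2*b)) x := by
      have := (((hasDerivAt_id x).sub_const t).pow 2).div_const (2*b)
      simpa using this
    have := (((h1.sub h2).sub (hasDerivAt_id x)).add_const t).sub h3
    refine this.congr_deriv ?_
    rw [mul_div_mul_left _ _ two_ne_zero]
    ring
  have hFt : F t = 0 := by simp [hF]
  have hgoal : 0 ≤ F s := by
    rcases le_total t s with hts | hst
    · -- monotone on [t, b]
      have hmono : MonotoneOn F (Set.Icc t b) := by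
        apply monotoneOn_of_deriv_nonneg (convex_Icc t b)
        · intro x hx
          exact (hder x (ht0.trans_le hx.1)).continuousAt.continuousWithinAt
        · intro x hx
          rw [interior_Icc] at hx
          exact (hder x (ht0.trans hx.1)).differentiableAt.differentiableWithinAt
        · intro x hx
          rw [interior_Icc] at hx
          have hx0 : 0 < x := ht0.trans hx.1
          rw [(hder x hx0).deriv]
          have hlog : Real.log t - Real.log x ≤ t/x - 1 := by
            rw [← Real.log_div ht0.ne' hx0.ne']
            exact Real.log_le_sub_one_of_pos (div_pos ht0 hx0)
          have h1 : (x - t)/x ≤ Real.log x - Real.log t := by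
            have : t/x - 1 = -((x-t)/x) := by field_simp; ring
            rw [this] at hlog; linarith
          have h2 : (x - t)/b ≤ (x - t)/x := by
            rw [div_le_div_iff₀ hb hx0]
            nlinarith [hx.1, hx.2]
          linarith
      have h1 := hmono (Set.mem_Icc.mpr ⟨le_refl t, ht2⟩) (Set.mem_Icc.mpr ⟨hts, hs2⟩) hts
      rw [hFt] at h1; exact h1
    · -- antitone on [a, t]
      have hanti : AntitoneOn F (Set.Icc a t) := by
        apply antitoneOn_of_deriv_nonpos (convex_Icc a t)
        · intro x hx
          exact (hder x (ha.trans_le hx.1)).continuousAt.continuousWithinAt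
        · intro x hx
          rw [interior_Icc] at hx
          exact (hder x (ha.trans hx.1)).differentiableAt.differentiableWithinAt
        · intro x hx
          rw [interior_Icc] at hx
          have hx0 : 0 < x := ha.trans hx.1
          rw [(hder x hx0).deriv]
          have hlog : Real.log x - Real.log t ≤ x/t - 1 := by
            rw [← Real.log_div hx0.ne' ht0.ne']
            exact Real.log_le_sub_one_of_pos (div_pos hx0 ht0)
          have h1 : x/t - 1 = (x - t)/t := by field_simp
          have h2 : (x - t)/t ≤ (x - t)/b := by
            rw [div_le_div_iff₀ ht0 hb]
            nlinarith [hx.2]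
          linarith
      have h1 := hanti (Set.mem_Icc.mpr ⟨hs1, hst⟩) (Set.mem_Icc.mpr ⟨ht1, le_refl t⟩) hst
      rw [hFt] at h1; exact h1
  simp only [hF] at hgoal
  linarith

lemma integrable_of_bdd {α : Type*} [MeasurableSpace α] {μ : Measure α} [IsFiniteMeasure μ]
    {f : α → ℝ} (hm : Measurable f) {C : ℝ} (h : ∀ x, |f x| ≤ C) : Integrable f μ :=
  ⟨hm.aestronglyMeasurable, HasFiniteIntegral.of_bounded (C := C)
    (ae_of_all _ (by simpa [Real.norm_eq_abs] using h))⟩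

lemma cauchy_schwarz_int {α : Type*} [MeasurableSpace α] {μ : Measure α} {f g : α → ℝ}
    (hf2 : Integrable (fun x => f x ^ 2) μ) (hg2 : Integrable (fun x => g x ^ 2) μ)
    (hfg : Integrable (fun x => f x * g x) μ) :
    (∫ x, f x * g x ∂μ) ^ 2 ≤ (∫ x, f x ^ 2 ∂μ) * (∫ x, g x ^ 2 ∂μ) := by
  set I := ∫ x, f x * g x ∂μ
  set R := ∫ x, f x ^ 2 ∂μ
  set Q := ∫ x, g x ^ 2 ∂μ
  have hR : 0 ≤ R := integral_nonneg fun x => sq_nonneg _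
  have hQ : 0 ≤ Q := integral_nonneg fun x => sq_nonneg _
  have key : ∀ l : ℝ, 0 ≤ R - 2*l*I + l^2*Q := by
    intro l
    have hi1 : Integrable (fun x => f x ^ 2 - 2*l * (f x * g x)) μ := by
      exact hf2.sub (hfg.const_mul (2*l))
    have hi2 : Integrable (fun x => l^2 * (g x ^ 2)) μ := hg2.const_mul (l^2)
    have h0 : 0 ≤ ∫ x, (f x - l * g x)^2 ∂μ := integral_nonneg fun x => sq_nonneg _
    have heq : ∫ x, (f x - l * g x)^2 ∂μ
        = ∫ x, (f x ^ 2 - 2*l * (f x * g x) + l^2 * (g x ^ 2)) ∂μ := by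
      congr 1; funext x; ring
    rw [heq, integral_add hi1 hi2,
      integral_sub hf2 (hfg.const_mul (2*l)), integral_const_mul, integral_const_mul] at h0
    linarith
  rcases eq_or_lt_of_le hQ with hQ0 | hQ0
  · have hI : I = 0 := by
      by_contra hI
      have hI2 : 0 < I^2 := by positivity
      have h1 := key ((R/I^2+1)*I)
      rw [← hQ0] at h1
      have h2 : (R/I^2)*I^2 = R := div_mul_cancel₀ _ hI2.ne'
      nlinarith
    rw [hI]; nlinarith
  · have h1 := key (I/Q)
    have h2 : R - 2*(I/Q)*I + (I/Q)^2*Q = R - I^2/Q := by field_simp; ring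
    rw [h2] at h1
    rw [← sub_nonneg]
    have := (div_le_iff₀ hQ0).mp (by linarith : I^2/Q ≤ R)
    linarith

lemma final_combine {c D I Q R : ℝ} (hc : 0 < c) (hQ0 : 0 ≤ Q) (hR0 : 0 ≤ R)
    (h1 : D ≤ I) (h2 : c/2*Q ≤ D) (h3 : I^2 ≤ R*Q) : c/2*D ≤ R := by
  rcases le_or_gt I 0 with hI | hI
  · nlinarith
  · have hcQ : c*Q ≤ 2*I := by linarith
    have h4 : c*I^2 ≤ 2*R*I := by
      nlinarith [mul_le_mul_of_nonneg_left hcQ hR0, mul_le_mul_of_nonneg_left h3 hc.le]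
    have h5 : c * I ≤ 2 * R := by nlinarith
    have h6 : c * D ≤ c * I := mul_le_mul_of_nonneg_left h1 hc.le
    linarith

/-- Strong-convexity gradient-domination inequality for the strategy energy. -/
theorem strategy_energy_gradient_domination
    {U : Type*} [MeasurableSpace U] (η : Measure U) [IsProbabilityMeasure η]
    (ε a b c : ℝ) (hε : 0 < ε) (ha : 0 < a) (hab : a < b)
    (g : U → ℝ) (hg : Measurable g) (M : ℝ) (hgb : ∀ u, |g u| ≤ M)
    (σstar : U → ℝ)
    (hσstar : ∀ u, σstar u = Real.exp (g u / ε) / ∫ v, Real.exp (g v / ε) ∂η)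
    (hσstarb : ∀ u, σstar u ∈ Set.Icc a b)
    (hc : 0 < c) (hcb : ∀ s ∈ Set.Icc a b, c ≤ ε / s) :
    ∀ σ : U → ℝ, Measurable σ → (∀ u, σ u ∈ Set.Icc a b) → (∫ u, σ u ∂η) = 1 →
      (c / 2) * (stratEnergy η ε g σ - stratEnergy η ε g σstar)
        ≤ ∫ u, ((-(g u) + ε * Real.log (σ u))
            - ∫ v, (-(g v) + ε * Real.log (σ v)) * σ v ∂η) ^ 2 ∂η := by
  intro σ hσm hσb hσ1
  have hb : (0:ℝ) < b := ha.trans hab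
  have hU : Nonempty U := by
    by_contra h
    rw [not_nonempty_iff] at h
    have h1 : (η Set.univ) = 1 := measure_univ
    rw [Set.univ_eq_empty_iff.mpr h] at h1
    simp at h1
  obtain ⟨u₀⟩ := hU
  have hM0 : 0 ≤ M := (abs_nonneg _).trans (hgb u₀)
  set Z := ∫ v, Real.exp (g v / ε) ∂η with hZdef
  have hZpos : 0 < Z := by
    by_contra h
    push_neg at h
    have h1 := (hσstarb u₀).1
    rw [hσstar u₀] at h1
    have h2 : Real.exp (g u₀ / ε) / Z ≤ 0 :=
      div_nonpos_of_nonneg_of_nonpos (Real.exp_pos _).le h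
    linarith
  have hσsm : Measurable σstar := by
    have heq : σstar = fun u => Real.exp (g u / ε) / Z := funext fun u => by rw [hσstar u]
    rw [heq]
    exact (Real.measurable_exp.comp (hg.div_const ε)).div_const Z
  have hexpint : Integrable (fun v => Real.exp (g v / ε)) η := by
    apply integrable_of_bdd ((hg.div_const ε).exp) (C := Real.exp (M/ε))
    intro v
    rw [abs_of_pos (Real.exp_pos _)]
    apply Real.exp_le_exp.mpr
    gcongr
    exact (abs_le.mp (hgb v)).2
  have hσs1 : ∫ u, σstar u ∂η = 1 := by
    have heq : ∫ u, σstar u ∂η = ∫ u, Real.exp (g u / ε) / Z ∂η := by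
      congr 1; funext u; rw [hσstar u]
    rw [heq, integral_div, ← hZdef, div_self hZpos.ne']
  set L := |Real.log a| + |Real.log b| with hLdef
  have hL : ∀ x, a ≤ x → x ≤ b → |Real.log x| ≤ L := by
    intro x h1 h2
    have hx : 0 < x := ha.trans_le h1
    have l1 : Real.log a ≤ Real.log x := Real.log_le_log ha h1
    have l2 : Real.log x ≤ Real.log b := Real.log_le_log hx h2
    rw [abs_le]
    constructor
    · have := neg_abs_le (Real.log a); simp only [hLdef]
      linarith [abs_nonneg (Real.log b)]
    · have := le_abs_self (Real.log b); simp only [hLdef]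
      linarith [abs_nonneg (Real.log a)]
  have hL0 : 0 ≤ L := by positivity
  have habsub : ∀ x y : ℝ, |x - y| ≤ |x| + |y| := by
    intro x y
    have := abs_add_le x (-y)
    simpa [sub_eq_add_neg] using this
  have habmul : ∀ (x y X Y : ℝ), |x| ≤ X → |y| ≤ Y → |x*y| ≤ X*Y := by
    intro x y X Y hx hy
    rw [abs_mul]
    exact mul_le_mul hx hy (abs_nonneg _) ((abs_nonneg x).trans hx)
  have hσabs : ∀ u, |σ u| ≤ b := fun u => abs_le.mpr ⟨by linarith [(hσb u).1], (hσb u).2⟩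
  have hσsabs : ∀ u, |σstar u| ≤ b :=
    fun u => abs_le.mpr ⟨by linarith [(hσstarb u).1], (hσstarb u).2⟩
  have hlogσ : ∀ u, |Real.log (σ u)| ≤ L := fun u => hL _ (hσb u).1 (hσb u).2
  have hlogσs : ∀ u, |Real.log (σstar u)| ≤ L := fun u => hL _ (hσstarb u).1 (hσstarb u).2
  have hdabs : ∀ u, |σ u - σstar u| ≤ b + b :=
    fun u => (habsub _ _).trans (add_le_add (hσabs u) (hσsabs u))
  have hφabs : ∀ u, |(-(g u) + ε * Real.log (σ u))| ≤ M + ε * L := by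
    intro u
    calc |(-(g u) + ε * Real.log (σ u))| ≤ |(-(g u))| + |ε * Real.log (σ u)| := abs_add_le _ _
      _ = |g u| + ε * |Real.log (σ u)| := by rw [abs_neg, abs_mul, abs_of_pos hε]
      _ ≤ M + ε * L := add_le_add (hgb u) (mul_le_mul_of_nonneg_left (hlogσ u) hε.le)
  have hφm : Measurable (fun u => -(g u) + ε * Real.log (σ u)) :=
    hg.neg.add ((Real.measurable_log.comp hσm).const_mul ε)
  -- integrability of the energy integrands
  have henbd : ∀ (τ : U → ℝ), (∀ u, |τ u| ≤ b) → (∀ u, |Real.log (τ u)| ≤ L) →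
      ∀ u, |(-(g u) * τ u + ε * (τ u * Real.log (τ u) - τ u + 1))|
        ≤ M * b + ε * (b * L + b + 1) := by
    intro τ hτ hlτ u
    calc |(-(g u) * τ u + ε * (τ u * Real.log (τ u) - τ u + 1))|
        ≤ |(-(g u)) * τ u| + |ε * (τ u * Real.log (τ u) - τ u + 1)| := abs_add_le _ _
      _ ≤ M * b + ε * (b * L + b + 1) := by
          apply add_le_add
          · rw [show (-(g u)) * τ u = (-(g u)) * τ u from rfl]
            have : |(-(g u))| ≤ M := by rw [abs_neg]; exact hgb u
            exact habmul _ _ _ _ this (hτ u)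
          · rw [abs_mul, abs_of_pos hε]
            apply mul_le_mul_of_nonneg_left ?_ hε.le
            calc |τ u * Real.log (τ u) - τ u + 1|
                ≤ |τ u * Real.log (τ u) - τ u| + |(1:ℝ)| := abs_add_le _ _
              _ ≤ (|τ u * Real.log (τ u)| + |τ u|) + 1 := by
                  rw [abs_one]; exact add_le_add_left (habsub _ _) 1
              _ ≤ (b * L + b) + 1 := by
                  have := habmul _ _ _ _ (hτ u) (hlτ u)
                  linarith [hτ u]
  have int1 : Integrable (fun u => -(g u) * σ u + ε * (σ u * Real.log (σ u) - σ u + 1)) η := by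
    apply integrable_of_bdd ?_ (henbd σ hσabs hlogσ)
    exact (hg.neg.mul hσm).add
      ((((hσm.mul (Real.measurable_log.comp hσm)).sub hσm).add_const 1).const_mul ε)
  have int2 : Integrable
      (fun u => -(g u) * σstar u + ε * (σstar u * Real.log (σstar u) - σstar u + 1)) η := by
    apply integrable_of_bdd ?_ (henbd σstar hσsabs hlogσs)
    exact (hg.neg.mul hσsm).add
      ((((hσsm.mul (Real.measurable_log.comp hσsm)).sub hσsm).add_const 1).const_mul ε)
  have int3 : Integrable (fun u => (-(g u) + ε * Real.log (σ u)) * σ u) η := by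
    apply integrable_of_bdd (hφm.mul hσm) (C := (M + ε*L) * b)
    intro u; exact habmul _ _ _ _ (hφabs u) (hσabs u)
  set m := ∫ v, (-(g v) + ε * Real.log (σ v)) * σ v ∂η with hmdef
  have int5 : Integrable (fun u => (-(g u) + ε * Real.log (σ u)) * (σ u - σstar u)) η := by
    apply integrable_of_bdd (hφm.mul (hσm.sub hσsm)) (C := (M + ε*L) * (b+b))
    intro u; exact habmul _ _ _ _ (hφabs u) (hdabs u)
  have int6 : Integrable (fun u => ((-(g u) + ε * Real.log (σ u)) - m)^2) η := by
    apply integrable_of_bdd ((hφm.sub measurable_const).pow_const 2) (C := (M + ε*L + |m|)^2)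
    intro u
    rw [abs_of_nonneg (sq_nonneg _), ← sq_abs]
    apply pow_le_pow_left₀ (abs_nonneg _)
    exact (habsub _ _).trans (add_le_add (hφabs u) le_rfl)
  have int7 : Integrable (fun u => (σ u - σstar u)^2) η := by
    apply integrable_of_bdd ((hσm.sub hσsm).pow_const 2) (C := (b+b)^2)
    intro u
    rw [abs_of_nonneg (sq_nonneg _), ← sq_abs]
    exact pow_le_pow_left₀ (abs_nonneg _) (hdabs u) 2
  have int8 : Integrable (fun u => ((-(g u) + ε * Real.log (σ u)) - m) * (σ u - σstar u)) η := by
    apply integrable_of_bdd ((hφm.sub measurable_const).mul (hσm.sub hσsm))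
      (C := (M + ε*L + |m|) * (b+b))
    intro u
    exact habmul _ _ _ _ ((habsub _ _).trans (add_le_add (hφabs u) le_rfl)) (hdabs u)
  have int9 : Integrable σ η := integrable_of_bdd hσm hσabs
  have int10 : Integrable σstar η := integrable_of_bdd hσsm hσsabs
  have int12 : Integrable (fun u =>
      (-(g u) * σ u + ε * (σ u * Real.log (σ u) - σ u + 1)) -
      (-(g u) * σstar u + ε * (σstar u * Real.log (σstar u) - σstar u + 1))) η := by
    exact int1.sub int2
  set K := -(ε * Real.log Z) with hKdef
  have int11 : Integrable (fun u => K * (σ u - σstar u) + (c/2) * (σ u - σstar u)^2) η := by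
    exact ((int9.sub int10).const_mul K).add (int7.const_mul (c/2))
  have hKconst : ∀ u, -(g u) + ε * Real.log (σstar u) = K := by
    intro u
    rw [hσstar u, Real.log_div (Real.exp_pos _).ne' hZpos.ne', Real.log_exp, hKdef]
    field_simp
    ring
  -- pointwise convexity inequality (A)
  have hA : ∀ u, ((-(g u) * σ u + ε * (σ u * Real.log (σ u) - σ u + 1)) -
      (-(g u) * σstar u + ε * (σstar u * Real.log (σstar u) - σstar u + 1)))
      ≤ (-(g u) + ε * Real.log (σ u)) * (σ u - σstar u) := by
    intro u
    have hs0 : 0 < σ u := ha.trans_le (hσb u).1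
    have ht0 : 0 < σstar u := ha.trans_le (hσstarb u).1
    have hlog : Real.log (σ u) - Real.log (σstar u) ≤ σ u / σstar u - 1 := by
      rw [← Real.log_div hs0.ne' ht0.ne']
      exact Real.log_le_sub_one_of_pos (div_pos hs0 ht0)
    have key : σstar u * (Real.log (σ u) - Real.log (σstar u)) ≤ σ u - σstar u := by
      have h1 := mul_le_mul_of_nonneg_left hlog ht0.le
      have h2 : σstar u * (σ u / σstar u - 1) = σ u - σstar u := by field_simp
      linarith
    nlinarith [mul_le_mul_of_nonneg_left key hε.le]
  -- pointwise strong convexity inequality (B)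
  have hB : ∀ u, K * (σ u - σstar u) + (c/2) * (σ u - σstar u)^2
      ≤ ((-(g u) * σ u + ε * (σ u * Real.log (σ u) - σ u + 1)) -
        (-(g u) * σstar u + ε * (σstar u * Real.log (σstar u) - σstar u + 1))) := by
    intro u
    have hkey := key_ineq ha hab (hσb u) (hσstarb u)
    have hcb' : c ≤ ε / b := hcb b ⟨hab.le, le_refl b⟩
    have h1 : ε * ((σ u - σstar u)^2/(2*b))
        ≤ ε * (σ u * Real.log (σ u) - σ u * Real.log (σstar u) - σ u + σstar u) :=
      mul_le_mul_of_nonneg_left hkey hε.le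
    have hc2 : c/2 ≤ ε/(2*b) := by
      rw [div_le_div_iff₀ two_pos (by positivity : (0:ℝ) < 2*b)]
      rw [le_div_iff₀ hb] at hcb'
      nlinarith
    have h2 : (c/2) * (σ u - σstar u)^2 ≤ ε * ((σ u - σstar u)^2/(2*b)) := by
      calc (c/2) * (σ u - σstar u)^2 ≤ (ε/(2*b)) * (σ u - σstar u)^2 :=
            mul_le_mul_of_nonneg_right hc2 (sq_nonneg _)
        _ = ε * ((σ u - σstar u)^2/(2*b)) := by ring
    rw [← hKconst u]
    nlinarith [h1, h2]
  -- integrate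
  have hDle : ∫ u, ((-(g u) * σ u + ε * (σ u * Real.log (σ u) - σ u + 1)) -
      (-(g u) * σstar u + ε * (σstar u * Real.log (σstar u) - σstar u + 1))) ∂η
      ≤ ∫ u, (-(g u) + ε * Real.log (σ u)) * (σ u - σstar u) ∂η :=
    integral_mono int12 int5 hA
  have hQle : ∫ u, (K * (σ u - σstar u) + (c/2) * (σ u - σstar u)^2) ∂η
      ≤ ∫ u, ((-(g u) * σ u + ε * (σ u * Real.log (σ u) - σ u + 1)) -
      (-(g u) * σstar u + ε * (σstar u * Real.log (σstar u) - σstar u + 1))) ∂η :=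
    integral_mono int11 int12 hB
  have hQeq : ∫ u, (K * (σ u - σstar u) + (c/2) * (σ u - σstar u)^2) ∂η
      = (c/2) * ∫ u, (σ u - σstar u)^2 ∂η := by
    rw [integral_add (by exact (int9.sub int10).const_mul K) (int7.const_mul (c/2)),
      integral_const_mul, integral_const_mul, integral_sub int9 int10, hσ1, hσs1]
    ring
  have hIeq : ∫ u, ((-(g u) + ε * Real.log (σ u)) - m) * (σ u - σstar u) ∂η
      = ∫ u, (-(g u) + ε * Real.log (σ u)) * (σ u - σstar u) ∂η := by
    have heq : ∫ u, ((-(g u) + ε * Real.log (σ u)) - m) * (σ u - σstar u) ∂η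
        = ∫ u, ((-(g u) + ε * Real.log (σ u)) * (σ u - σstar u) - m * (σ u - σstar u)) ∂η := by
      congr 1; funext u; ring
    rw [heq, integral_sub int5 (by exact (int9.sub int10).const_mul m),
      integral_const_mul, integral_sub int9 int10, hσ1, hσs1]
    ring
  have hCS := cauchy_schwarz_int (μ := η)
    (f := fun u => (-(g u) + ε * Real.log (σ u)) - m)
    (g := fun u => σ u - σstar u) int6 int7 int8
  rw [hIeq] at hCS
  -- assemble
  have hDeq : stratEnergy η ε g σ - stratEnergy η ε g σstar
      = ∫ u, ((-(g u) * σ u + ε * (σ u * Real.log (σ u) - σ u + 1)) -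
        (-(g u) * σstar u + ε * (σstar u * Real.log (σstar u) - σstar u + 1))) ∂η := by
    unfold stratEnergy
    rw [integral_sub int1 int2]
  rw [hDeq]
  set D := ∫ u, ((-(g u) * σ u + ε * (σ u * Real.log (σ u) - σ u + 1)) -
        (-(g u) * σstar u + ε * (σstar u * Real.log (σstar u) - σstar u + 1))) ∂η
  set I := ∫ u, (-(g u) + ε * Real.log (σ u)) * (σ u - σstar u) ∂η
  set Q := ∫ u, (σ u - σstar u)^2 ∂η
  set R := ∫ u, ((-(g u) + ε * Real.log (σ u)) - m)^2 ∂η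
  have hQ0 : 0 ≤ Q := integral_nonneg fun u => sq_nonneg _
  have hR0 : 0 ≤ R := integral_nonneg fun u => sq_nonneg _
  rw [hQeq] at hQle
  clear_value D I Q R
  exact final_combine hc hQ0 hR0 hDle hQle hCS
end
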